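/- arXiv:2005.05563 — 10 statements merged into one kernel-verified Lean document; each statement's English description precedes it below -/
import Mathlib

section
/- Let p and ℓ be primes with ord_ℓ(p) = ℓ−1, let q = p^((ℓ−1)k) for a positive integer k, let ω be a generator of the multiplicative group F_q^*, and let φ : x ↦ x^p be the Frobenius. Then the subgroup of permutations of F_q^* generated by multiplication by ω^ℓ and by φ has exactly two orbits on F_q^*: the subgroup C = ⟨ω^ℓ⟩ and its complement F_q^* \ C. -/
theorem stmt_2 (p ℓ k : ℕ) (hp : p.Prime) (hℓ : ℓ.Prime)
    (hord : orderOf (p : ZMod ℓ) = ℓ - 1) (hk : 1 ≤ k)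
    (F : Type*) [Field F] [Fintype F] (hcard : Fintype.card F = p ^ ((ℓ - 1) * k))
    (ω : Fˣ) (hω : ∀ x : Fˣ, x ∈ Subgroup.zpowers ω)
    (φ : Equiv.Perm Fˣ) (hφ : ∀ x : Fˣ, φ x = x ^ p) :
    MulAction.orbit (Subgroup.closure {Equiv.mulLeft (ω ^ ℓ), φ}) (1 : Fˣ) =
        (Subgroup.zpowers (ω ^ ℓ) : Set Fˣ) ∧
      ∀ x : Fˣ, x ∉ (Subgroup.zpowers (ω ^ ℓ) : Set Fˣ) →
        MulAction.orbit (Subgroup.closure {Equiv.mulLeft (ω ^ ℓ), φ}) x =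
          (Subgroup.zpowers (ω ^ ℓ) : Set Fˣ)ᶜ := by
  classical
  haveI : Fact ℓ.Prime := ⟨hℓ⟩
  set a : Equiv.Perm Fˣ := Equiv.mulLeft (ω ^ ℓ) with ha
  set G : Subgroup (Equiv.Perm Fˣ) := Subgroup.closure {a, φ} with hG
  set C : Subgroup Fˣ := Subgroup.zpowers (ω ^ ℓ) with hC
  have hℓ2 := hℓ.two_le
  have hq1 : 1 ≤ p ^ ((ℓ - 1) * k) := Nat.one_le_pow _ _ hp.pos
  have hpow1 : (p : ZMod ℓ) ^ (ℓ - 1) = 1 := hord ▸ pow_orderOf_eq_one _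
  have hp0 : (p : ZMod ℓ) ≠ 0 := by
    intro h
    rw [h, zero_pow (by omega)] at hpow1
    exact zero_ne_one hpow1
  have hdvd : ℓ ∣ p ^ ((ℓ - 1) * k) - 1 := by
    rw [← ZMod.natCast_eq_zero_iff]
    rw [Nat.cast_sub hq1]
    push_cast
    rw [pow_mul, hpow1, one_pow]
    ring
  have horder : orderOf ω = p ^ ((ℓ - 1) * k) - 1 := by
    rw [orderOf_eq_card_of_forall_mem_zpowers hω, Nat.card_eq_fintype_card,
      Fintype.card_units, hcard]
  -- exponent characterization of membership in C
  have hmem : ∀ i : ℤ, ω ^ i ∈ C ↔ (i : ZMod ℓ) = 0 := by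
    intro i
    rw [ZMod.intCast_zmod_eq_zero_iff_dvd]
    constructor
    · rintro ⟨m, hm⟩
      have hm' : ω ^ ((ℓ : ℤ) * m) = ω ^ i := by
        rw [zpow_mul, zpow_natCast]; exact hm
      have h1 : ω ^ ((ℓ : ℤ) * m - i) = 1 := by
        rw [zpow_sub, hm']; simp
      rw [← orderOf_dvd_iff_zpow_eq_one, horder] at h1
      have h2 : (ℓ : ℤ) ∣ (ℓ : ℤ) * m - i :=
        dvd_trans (Int.natCast_dvd_natCast.mpr hdvd) h1
      have h3 := dvd_sub (Dvd.intro m rfl) h2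
      simpa using h3
    · rintro ⟨m, rfl⟩
      refine ⟨m, ?_⟩
      show (ω ^ ℓ) ^ m = ω ^ ((ℓ : ℤ) * m)
      rw [← zpow_natCast ω ℓ, ← zpow_mul]
  have hrep : ∀ x : Fˣ, ∃ i : ℤ, ω ^ i = x := fun x =>
    Subgroup.mem_zpowers_iff.mp (hω x)
  -- power of φ
  have hφt : ∀ (t : ℕ) (x : Fˣ), (φ ^ t) x = x ^ (p ^ t) := by
    intro t
    induction t with
    | zero => intro x; simp
    | succ t ih =>
      intro x
      rw [pow_succ', Equiv.Perm.mul_apply, ih, hφ, ← pow_mul, pow_succ, mul_comm (p^t) p,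
        pow_mul]
  -- invariance of C under every element of G
  have key : ∀ σ ∈ G, ∀ x : Fˣ, (x ∈ C ↔ σ x ∈ C) := by
    intro σ hσ
    induction hσ using Subgroup.closure_induction with
    | mem τ hτ =>
      rcases hτ with rfl | rfl
      · intro x
        simpa [ha] using (Subgroup.mul_mem_cancel_left C (Subgroup.mem_zpowers (ω ^ ℓ))).symm
      · intro x
        obtain ⟨i, rfl⟩ := hrep x
        rw [hφ, ← zpow_natCast (ω ^ i) p, ← zpow_mul, hmem, hmem]
        push_cast
        rw [mul_eq_zero]
        simp [hp0]
    | one => simp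
    | mul σ τ hσ hτ ihσ ihτ =>
      intro x
      rw [Equiv.Perm.mul_apply]
      exact (ihτ x).trans (ihσ (τ x))
    | inv σ hσ ih =>
      intro x
      have := ih (σ⁻¹ x)
      simpa using this.symm
  have haG : a ∈ G := Subgroup.subset_closure (Set.mem_insert _ _)
  have hφG : φ ∈ G := Subgroup.subset_closure (Set.mem_insert_of_mem _ rfl)
  constructor
  · ext y
    constructor
    · rintro ⟨⟨σ, hσ⟩, rfl⟩
      have := (key σ hσ 1).mp (one_mem C)
      simpa using this
    · rintro hy
      obtain ⟨m, hm⟩ := Subgroup.mem_zpowers_iff.mp hy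
      refine ⟨⟨a ^ m, Subgroup.zpow_mem G haG m⟩, ?_⟩
      show (a ^ m) 1 = y
      rw [ha, Equiv.zpow_mulLeft]
      simpa using hm
  · intro x hx
    ext y
    constructor
    · rintro ⟨⟨σ, hσ⟩, rfl⟩
      intro hy
      exact hx ((key σ hσ x).mpr hy)
    · intro hy
      obtain ⟨i, rfl⟩ := hrep x
      obtain ⟨j, rfl⟩ := hrep y
      have hi : (i : ZMod ℓ) ≠ 0 := fun h => hx ((hmem i).mpr h)
      have hj : (j : ZMod ℓ) ≠ 0 := fun h => hy ((hmem j).mpr h)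
      -- p generates (ZMod ℓ)ˣ
      set u : (ZMod ℓ)ˣ := Units.mk0 (p : ZMod ℓ) hp0 with hu
      have hou : orderOf u = ℓ - 1 := by rw [← orderOf_units]; exact hord
      have hcardu : Nat.card (ZMod ℓ)ˣ = ℓ - 1 := by
        rw [Nat.card_eq_fintype_card, ZMod.card_units_eq_totient, Nat.totient_prime hℓ]
      have htop : Subgroup.zpowers u = ⊤ := by
        apply Subgroup.eq_top_of_card_eq
        rw [Nat.card_zpowers, hou, hcardu]
      have hv : (Units.mk0 (j : ZMod ℓ) hj) * (Units.mk0 (i : ZMod ℓ) hi)⁻¹ ∈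
          Subgroup.zpowers u := htop ▸ Subgroup.mem_top _
      obtain ⟨t, ht⟩ := Submonoid.mem_powers_iff _ _ |>.mp
        (mem_powers_iff_mem_zpowers.mpr hv)
      have ht' : (p : ZMod ℓ) ^ t * (i : ZMod ℓ) = (j : ZMod ℓ) := by
        have := congrArg (Units.val) ht
        simp only [Units.val_pow_eq_pow_val, hu, Units.val_mk0, Units.val_mul] at this
        field_simp at this
        rw [this, Units.val_inv_eq_inv_val, Units.val_mk0, inv_mul_cancel_right₀ hi]
      have hdvd2 : (ℓ : ℤ) ∣ j - i * (p : ℤ) ^ t := by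
        rw [← ZMod.intCast_zmod_eq_zero_iff_dvd]
        push_cast
        rw [← ht']
        ring
      obtain ⟨s, hs⟩ := hdvd2
      refine ⟨⟨a ^ s * φ ^ t, mul_mem (Subgroup.zpow_mem G haG s)
        (pow_mem hφG t)⟩, ?_⟩
      show (a ^ s * φ ^ t) (ω ^ i) = ω ^ j
      rw [Equiv.Perm.mul_apply, hφt, ha, Equiv.zpow_mulLeft, Equiv.coe_mulLeft,
        ← zpow_natCast (ω ^ i) (p ^ t), ← zpow_mul, ← zpow_natCast ω ℓ, ← zpow_mul]
      show ω ^ ((ℓ : ℤ) * s) * ω ^ (i * ((p ^ t : ℕ) : ℤ)) = ω ^ j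
      rw [← zpow_add]
      congr 1
      push_cast
      omega
end

section
/- Let p ≡ 3 (mod 4) be a prime, r an even positive integer, q = p^r, ω a generator of F_q^*, and C = ⟨ω^4⟩. Then the subgroup of Sym(F_q^*) generated by multiplication by ω^4 and by the map x ↦ x^p·ω has exactly two orbits on F_q^*, namely C ∪ Cω and Cω^2 ∪ Cω^3. -/
private def stmt3MulLeftHom (G : Type*) [Group G] : G →* Equiv.Perm G where
  toFun := Equiv.mulLeft
  map_one' := by ext x; simp
  map_mul' a b := by ext x; simp [mul_assoc]

private lemma stmt3_mulLeft_zpow {G : Type*} [Group G] (a : G) (t : ℤ) :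
    Equiv.mulLeft a ^ t = Equiv.mulLeft (a ^ t) :=
  (map_zpow (stmt3MulLeftHom G) a t).symm

theorem stmt_3 (p r : ℕ) (hp : p.Prime) (hp4 : p % 4 = 3) (hr : Even r) (hr0 : 0 < r)
    (F : Type*) [Field F] [Fintype F] (hcard : Fintype.card F = p ^ r)
    (ω : Fˣ) (hω : ∀ x : Fˣ, x ∈ Subgroup.zpowers ω)
    (ψ : Equiv.Perm Fˣ) (hψ : ∀ x : Fˣ, ψ x = x ^ p * ω) :
    (∀ x ∈ (Subgroup.zpowers (ω ^ 4) : Set Fˣ) ∪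
        (· * ω) '' (Subgroup.zpowers (ω ^ 4) : Set Fˣ),
      MulAction.orbit (Subgroup.closure {Equiv.mulLeft (ω ^ 4), ψ}) x =
        (Subgroup.zpowers (ω ^ 4) : Set Fˣ) ∪
          (· * ω) '' (Subgroup.zpowers (ω ^ 4) : Set Fˣ)) ∧
    ∀ x ∈ (· * ω ^ 2) '' (Subgroup.zpowers (ω ^ 4) : Set Fˣ) ∪
        (· * ω ^ 3) '' (Subgroup.zpowers (ω ^ 4) : Set Fˣ),
      MulAction.orbit (Subgroup.closure {Equiv.mulLeft (ω ^ 4), ψ}) x =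
        (· * ω ^ 2) '' (Subgroup.zpowers (ω ^ 4) : Set Fˣ) ∪
          (· * ω ^ 3) '' (Subgroup.zpowers (ω ^ 4) : Set Fˣ) := by
  classical
  have hpow4 : ∀ k : ℤ, (ω ^ 4) ^ k = ω ^ (4 * k) := by
    intro k; rw [← zpow_natCast ω 4, ← zpow_mul]; norm_num
  have hmul : ∀ (a : ℤ) (i : ℕ), ω ^ a * ω ^ i = ω ^ (a + (i : ℤ)) := by
    intro a i; rw [← zpow_natCast ω i, ← zpow_add]
  -- 4 divides the order of ω
  have hcardu : Fintype.card Fˣ = p ^ r - 1 := by rw [Fintype.card_units, hcard]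
  have hp1 : 1 ≤ p ^ r := Nat.one_le_pow _ _ hp.pos
  have h4 : 4 ∣ p ^ r - 1 := by
    obtain ⟨s, hs⟩ := hr
    have hpz : ((p : ZMod 4)) = 3 := by
      rw [← ZMod.natCast_mod, hp4]; rfl
    have h1 : ((p ^ r : ℕ) : ZMod 4) = 1 := by
      push_cast
      have h9 : ((3 : ZMod 4)) ^ 2 = 1 := by decide
      rw [hpz, hs, ← two_mul, pow_mul, h9, one_pow]
    have h0 : (((p ^ r - 1 : ℕ)) : ZMod 4) = 0 := by
      rw [Nat.cast_sub hp1, h1]; simp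
    exact (ZMod.natCast_eq_zero_iff _ _).mp h0
  have hN4 : (4 : ℤ) ∣ (orderOf ω : ℤ) := by
    have h := orderOf_eq_card_of_forall_mem_zpowers hω
    rw [h, Nat.card_eq_fintype_card, hcardu]; exact_mod_cast h4
  have heq4 : ∀ a b : ℤ, ω ^ a = ω ^ b → a % 4 = b % 4 := by
    intro a b h
    have h1 : a % (orderOf ω : ℤ) = b % (orderOf ω : ℤ) := zpow_eq_zpow_iff_modEq.mp h
    calc a % 4 = a % (orderOf ω : ℤ) % 4 := (Int.emod_emod_of_dvd a hN4).symm
      _ = b % (orderOf ω : ℤ) % 4 := by rw [h1]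
      _ = b % 4 := Int.emod_emod_of_dvd b hN4
  set μ : Equiv.Perm Fˣ := Equiv.mulLeft (ω ^ 4) with hμdef
  set H : Subgroup (Equiv.Perm Fˣ) := Subgroup.closure {μ, ψ} with hHdef
  set S0 : Set Fˣ := (Subgroup.zpowers (ω ^ 4) : Set Fˣ) ∪
      (· * ω) '' (Subgroup.zpowers (ω ^ 4) : Set Fˣ) with hS0def
  set S2 : Set Fˣ := (· * ω ^ 2) '' (Subgroup.zpowers (ω ^ 4) : Set Fˣ) ∪
      (· * ω ^ 3) '' (Subgroup.zpowers (ω ^ 4) : Set Fˣ) with hS2def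
  have hμH : μ ∈ H := Subgroup.subset_closure (Set.mem_insert _ _)
  have hψH : ψ ∈ H := Subgroup.subset_closure (Set.mem_insert_of_mem _ rfl)
  have hμt : ∀ (t : ℤ) (x : Fˣ), (μ ^ t) x = ω ^ (4 * t) * x := by
    intro t x
    rw [hμdef, stmt3_mulLeft_zpow, hpow4, Equiv.coe_mulLeft]
  have hψz : ∀ m : ℤ, ψ (ω ^ m) = ω ^ (m * p + 1) := by
    intro m
    rw [hψ, ← zpow_natCast (ω ^ m) p, ← zpow_mul, zpow_add_one]
  have hμz : ∀ m : ℤ, μ (ω ^ m) = ω ^ (m + 4) := by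
    intro m
    show ω ^ (4 : ℕ) * ω ^ m = _
    rw [← zpow_natCast ω 4, ← zpow_add]
    congr 1; omega
  have hψres : ∀ m : ℤ, (m * p + 1) % 4 = (m % 4 * 3 + 1) % 4 := by
    intro m
    have ha : m ≡ m % 4 [ZMOD 4] := (Int.emod_emod_of_dvd m dvd_rfl).symm
    have hb : (p : ℤ) ≡ 3 [ZMOD 4] := by show (p : ℤ) % 4 = 3 % 4; omega
    exact (ha.mul hb).add_right 1
  -- membership descriptions
  have hrep0 : ∀ x : Fˣ, x ∈ S0 ↔ ∃ m : ℤ, x = ω ^ m ∧ (m % 4 = 0 ∨ m % 4 = 1) := by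
    intro x
    constructor
    · rintro (hx | ⟨c, hc, rfl⟩)
      · obtain ⟨k, hk⟩ := Subgroup.mem_zpowers_iff.mp hx
        exact ⟨4 * k, by rw [← hk, hpow4], by omega⟩
      · obtain ⟨k, hk⟩ := Subgroup.mem_zpowers_iff.mp hc
        refine ⟨4 * k + 1, ?_, by omega⟩
        rw [← hk, hpow4]
        exact (zpow_add_one ω (4 * k)).symm
    · rintro ⟨m, rfl, hm | hm⟩
      · exact Or.inl (Subgroup.mem_zpowers_iff.mpr ⟨m / 4, by rw [hpow4]; congr 1; omega⟩)
      · refine Or.inr ⟨(ω ^ 4) ^ (m / 4), Subgroup.mem_zpowers_iff.mpr ⟨m / 4, rfl⟩, ?_⟩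
        show (ω ^ 4) ^ (m / 4) * ω = ω ^ m
        rw [hpow4, ← zpow_add_one]
        congr 1; omega
  have hrep2 : ∀ x : Fˣ, x ∈ S2 ↔ ∃ m : ℤ, x = ω ^ m ∧ (m % 4 = 2 ∨ m % 4 = 3) := by
    intro x
    constructor
    · rintro (⟨c, hc, rfl⟩ | ⟨c, hc, rfl⟩) <;>
        obtain ⟨k, hk⟩ := Subgroup.mem_zpowers_iff.mp hc
      · refine ⟨4 * k + 2, ?_, by omega⟩
        show c * ω ^ 2 = ω ^ (4 * k + 2)
        rw [← hk, hpow4, hmul]; norm_num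
      · refine ⟨4 * k + 3, ?_, by omega⟩
        show c * ω ^ 3 = ω ^ (4 * k + 3)
        rw [← hk, hpow4, hmul]; norm_num
    · rintro ⟨m, rfl, hm | hm⟩
      · refine Or.inl ⟨(ω ^ 4) ^ (m / 4), Subgroup.mem_zpowers_iff.mpr ⟨m / 4, rfl⟩, ?_⟩
        show (ω ^ 4) ^ (m / 4) * ω ^ 2 = ω ^ m
        rw [hpow4, hmul]
        congr 1; omega
      · refine Or.inr ⟨(ω ^ 4) ^ (m / 4), Subgroup.mem_zpowers_iff.mpr ⟨m / 4, rfl⟩, ?_⟩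
        show (ω ^ 4) ^ (m / 4) * ω ^ 3 = ω ^ m
        rw [hpow4, hmul]
        congr 1; omega
  have hcov : ∀ z : Fˣ, z ∈ S0 ∨ z ∈ S2 := by
    intro z
    obtain ⟨m, hm⟩ := Subgroup.mem_zpowers_iff.mp (hω z)
    have h4m : m % 4 = 0 ∨ m % 4 = 1 ∨ m % 4 = 2 ∨ m % 4 = 3 := by omega
    rcases h4m with h | h | h | h
    · exact Or.inl ((hrep0 z).mpr ⟨m, hm.symm, Or.inl h⟩)
    · exact Or.inl ((hrep0 z).mpr ⟨m, hm.symm, Or.inr h⟩)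
    · exact Or.inr ((hrep2 z).mpr ⟨m, hm.symm, Or.inl h⟩)
    · exact Or.inr ((hrep2 z).mpr ⟨m, hm.symm, Or.inr h⟩)
  have hdis : ∀ z : Fˣ, z ∈ S0 → z ∈ S2 → False := by
    intro z h0 h2
    obtain ⟨m, rfl, hm⟩ := (hrep0 z).mp h0
    obtain ⟨m', he, hm'⟩ := (hrep2 _).mp h2
    have := heq4 m m' he
    omega
  -- invariance of S0 and S2 under the group
  have hinv : ∀ g ∈ H, (∀ x ∈ S0, g x ∈ S0) ∧ (∀ x ∈ S2, g x ∈ S2) := by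
    intro g hg
    rw [hHdef] at hg
    induction hg using Subgroup.closure_induction with
    | mem g hgm =>
      rcases hgm with rfl | rfl
      · constructor <;> intro x hx
        · obtain ⟨m, rfl, hm⟩ := (hrep0 x).mp hx
          exact (hrep0 _).mpr ⟨m + 4, hμz m, by omega⟩
        · obtain ⟨m, rfl, hm⟩ := (hrep2 x).mp hx
          exact (hrep2 _).mpr ⟨m + 4, hμz m, by omega⟩
      · constructor <;> intro x hx
        · obtain ⟨m, rfl, hm⟩ := (hrep0 x).mp hx
          refine (hrep0 _).mpr ⟨m * p + 1, hψz m, ?_⟩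
          have := hψres m; omega
        · obtain ⟨m, rfl, hm⟩ := (hrep2 x).mp hx
          refine (hrep2 _).mpr ⟨m * p + 1, hψz m, ?_⟩
          have := hψres m; omega
    | one =>
      constructor <;> intro x hx <;> simpa using hx
    | mul a b ha hb iha ihb =>
      constructor <;> intro x hx
      · have := iha.1 _ (ihb.1 x hx)
        simpa [Equiv.Perm.mul_apply] using this
      · have := iha.2 _ (ihb.2 x hx)
        simpa [Equiv.Perm.mul_apply] using this
    | inv a ha ih =>
      constructor <;> intro x hx
      · rcases hcov (a⁻¹ x) with h | h
        · exact h
        · have h2 := ih.2 _ h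
          rw [← Equiv.Perm.mul_apply, mul_inv_cancel, Equiv.Perm.one_apply] at h2
          exact (hdis x hx h2).elim
      · rcases hcov (a⁻¹ x) with h | h
        · have h2 := ih.1 _ h
          rw [← Equiv.Perm.mul_apply, mul_inv_cancel, Equiv.Perm.one_apply] at h2
          exact (hdis x h2 hx).elim
        · exact h
  -- orbit building blocks
  have horb1 : ∀ (x : Fˣ) (t : ℤ), ω ^ (4 * t) * x ∈ MulAction.orbit H x := by
    intro x t
    exact ⟨⟨μ ^ t, Subgroup.zpow_mem _ hμH t⟩, hμt t x⟩
  have horb2 : ∀ (x : Fˣ) (t : ℤ), ω ^ (4 * t) * ψ x ∈ MulAction.orbit H x := by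
    intro x t
    refine ⟨⟨μ ^ t * ψ, mul_mem (Subgroup.zpow_mem _ hμH t) hψH⟩, ?_⟩
    show (μ ^ t) (ψ x) = _
    exact hμt t (ψ x)
  have hsame : ∀ a b : ℤ, a % 4 = b % 4 → ω ^ b ∈ MulAction.orbit H (ω ^ a) := by
    intro a b hab
    have h : ω ^ b = ω ^ (4 * ((b - a) / 4)) * ω ^ a := by
      rw [← zpow_add]; congr 1; omega
    rw [h]; exact horb1 _ _
  have hstep : ∀ a b : ℤ, b % 4 = (a * p + 1) % 4 → ω ^ b ∈ MulAction.orbit H (ω ^ a) := by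
    intro a b hab
    have key : 4 * ((b - (a * (p : ℤ) + 1)) / 4) + (a * (p : ℤ) + 1) = b := by
      generalize a * (p : ℤ) = c at hab ⊢
      omega
    have h : ω ^ b = ω ^ (4 * ((b - (a * (p : ℤ) + 1)) / 4)) * ψ (ω ^ a) := by
      rw [hψz, ← zpow_add, key]
    rw [h]; exact horb2 _ _
  -- finish
  constructor
  · intro x hx
    ext y
    constructor
    · rintro ⟨⟨g, hg⟩, rfl⟩
      exact (hinv g hg).1 x hx
    · intro hy
      obtain ⟨a, rfl, ha⟩ := (hrep0 x).mp hx
      obtain ⟨b, rfl, hb⟩ := (hrep0 y).mp hy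
      rcases ha with ha | ha <;> rcases hb with hb | hb
      · exact hsame a b (by omega)
      · refine hstep a b ?_
        have := hψres a; omega
      · refine hstep a b ?_
        have := hψres a; omega
      · exact hsame a b (by omega)
  · intro x hx
    ext y
    constructor
    · rintro ⟨⟨g, hg⟩, rfl⟩
      exact (hinv g hg).2 x hx
    · intro hy
      obtain ⟨a, rfl, ha⟩ := (hrep2 x).mp hx
      obtain ⟨b, rfl, hb⟩ := (hrep2 y).mp hy
      rcases ha with ha | ha <;> rcases hb with hb | hb
      · exact hsame a b (by omega)
      · refine hstep a b ?_
        have := hψres a; omega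
      · refine hstep a b ?_
        have := hψres a; omega
      · exact hsame a b (by omega)
end

section
/- Let X = ℤ/nℤ ⋊ ⟨α⟩ with α an automorphism of ℤ/nℤ, acting on ℤ/nℤ by u ↦ α^i(u) + a. If Y ≤ X has exactly two orbits O_1, O_2 on ℤ/nℤ and rad(O_1) is trivial, then n is a prime power. -/
private lemma set_inv_zpow {β : Type*} (f : Equiv.Perm β) (S : Set β)
    (h1 : ∀ x ∈ S, f x ∈ S) (h2 : ∀ x ∈ S, f⁻¹ x ∈ S) :
    ∀ (k : ℤ), ∀ x ∈ S, (f ^ k) x ∈ S := by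
  intro k
  induction k using Int.induction_on with
  | zero => intro x hx; simpa using hx
  | succ i ih =>
    intro x hx
    have : f ^ ((i : ℤ) + 1) = f ^ (i : ℤ) * f := by rw [zpow_add_one]
    rw [this, Equiv.Perm.mul_apply]
    exact ih _ (h1 x hx)
  | pred i ih =>
    intro x hx
    have : f ^ (-(i : ℤ) - 1) = f ^ (-(i : ℤ)) * f⁻¹ := by
      rw [← zpow_neg_one, ← zpow_add]; ring_nf
    rw [this, Equiv.Perm.mul_apply]
    exact ih _ (h2 x hx)

private lemma perm_fix_zpow {β : Type*} (f : Equiv.Perm β) {y : β} (h : f y = y)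
    (t : ℤ) : (f ^ t) y = y := by
  have h2 : f⁻¹ y = y := by
    conv_lhs => rw [← h]
    exact f.symm_apply_apply y
  have := set_inv_zpow f {x | x = y} (by rintro x rfl; exact h) (by rintro x rfl; exact h2) t y rfl
  exact this

private lemma perm_semiconj_zpow {β γ : Type*} (f : Equiv.Perm β) (f' : Equiv.Perm γ)
    (σ : β → γ) (h : ∀ x, σ (f x) = f' (σ x)) (k : ℤ) (x : β) :
    σ ((f ^ k) x) = (f' ^ k) (σ x) := by
  have hinv : ∀ x, σ (f⁻¹ x) = f'⁻¹ (σ x) := by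
    intro x
    apply f'.injective
    rw [← h, Equiv.Perm.coe_inv, Equiv.apply_symm_apply, Equiv.Perm.coe_inv, Equiv.apply_symm_apply]
  induction k using Int.induction_on generalizing x with
  | zero => simp
  | succ i ih =>
    have e : f ^ ((i : ℤ) + 1) = f ^ (i : ℤ) * f := by rw [zpow_add_one]
    have e' : f' ^ ((i : ℤ) + 1) = f' ^ (i : ℤ) * f' := by rw [zpow_add_one]
    rw [e, e', Equiv.Perm.mul_apply, Equiv.Perm.mul_apply, ih (f x), h]
  | pred i ih =>
    have e : f ^ (-(i : ℤ) - 1) = f ^ (-(i : ℤ)) * f⁻¹ := by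
      rw [← zpow_neg_one, ← zpow_add]; ring_nf
    have e' : f' ^ (-(i : ℤ) - 1) = f' ^ (-(i : ℤ)) * f'⁻¹ := by
      rw [← zpow_neg_one, ← zpow_add]; ring_nf
    rw [e, e', Equiv.Perm.mul_apply, Equiv.Perm.mul_apply, ih (f⁻¹ x), hinv]

private lemma perm_card_fix {β : Type*} [Fintype β] [DecidableEq β] (f : Equiv.Perm β) (y : β)
    (h : ∀ z, ∃ k : ℤ, (f ^ k) y = z) : (f ^ Fintype.card β) y = y := by
  have hord : 0 < orderOf f := orderOf_pos f
  have hper : Function.IsPeriodicPt ⇑f (orderOf f) y := by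
    have h1 : f ^ orderOf f = 1 := pow_orderOf_eq_one f
    show Function.IsFixedPt _ _
    show (⇑f)^[orderOf f] y = y
    rw [← Equiv.Perm.coe_pow, h1]; rfl
  set m := Function.minimalPeriod ⇑f y with hm
  have hmpos : 0 < m := hper.minimalPeriod_pos hord
  have hsurj : ∀ z, ∃ j : Fin m, (⇑f)^[(j : ℕ)] y = z := by
    intro z
    obtain ⟨k, hk⟩ := h z
    have e0 : ((orderOf f : ℤ)) ≠ 0 := by exact_mod_cast hord.ne'
    have hk2 : (⇑f)^[(k % (orderOf f : ℤ)).toNat] y = z := by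
      have h3 : f ^ k = f ^ (((k % (orderOf f : ℤ)).toNat : ℤ)) := by
        rw [Int.toNat_of_nonneg (Int.emod_nonneg k e0)]
        conv_lhs => rw [← Int.mul_ediv_add_emod k (orderOf f : ℤ)]
        rw [zpow_add, zpow_mul, zpow_natCast, pow_orderOf_eq_one, one_zpow, one_mul]
      rw [h3, zpow_natCast, Equiv.Perm.coe_pow] at hk
      exact hk
    refine ⟨⟨(k % (orderOf f : ℤ)).toNat % m, Nat.mod_lt _ hmpos⟩, ?_⟩
    rw [← hk2]
    exact Function.iterate_mod_minimalPeriod_eq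
  have hinj : Function.Injective (fun j : Fin m => (⇑f)^[(j : ℕ)] y) := by
    intro a b hab
    exact Fin.ext (Function.iterate_injOn_Iio_minimalPeriod a.2 b.2 hab)
  have hbij : Function.Bijective (fun j : Fin m => (⇑f)^[(j : ℕ)] y) := ⟨hinj, hsurj⟩
  have hcard : m = Fintype.card β := by simpa using Fintype.card_of_bijective hbij
  have hfin : (⇑f)^[m] y = y := Function.iterate_minimalPeriod
  rw [← hcard]
  rw [← Equiv.Perm.coe_pow] at hfin
  exact hfin

theorem stmt_7 (n : ℕ) [NeZero n] (α : AddAut (ZMod n))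
    (X : Subgroup (Equiv.Perm (ZMod n)))
    (hX : X = Subgroup.closure
      ((Set.range fun a : ZMod n => Equiv.addLeft a) ∪ {α.toEquiv}))
    (Y : Subgroup (Equiv.Perm (ZMod n))) (hYX : Y ≤ X)
    (O₁ O₂ : Set (ZMod n))
    (hO₁ : ∃ a, O₁ = MulAction.orbit Y a) (hO₂ : ∃ a, O₂ = MulAction.orbit Y a)
    (hcover : O₁ ∪ O₂ = Set.univ) (hdisj : Disjoint O₁ O₂)
    (hrad : {u : ZMod n | (fun x => x + u) '' O₁ = O₁} = {0}) :
    IsPrimePow n := by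
  classical
  obtain ⟨a₁, hA₁⟩ := hO₁
  obtain ⟨a₂, hA₂⟩ := hO₂
  have ha₁ : a₁ ∈ O₁ := by rw [hA₁]; exact MulAction.mem_orbit_self a₁
  have ha₂ : a₂ ∈ O₂ := by rw [hA₂]; exact MulAction.mem_orbit_self a₂
  -- every additive automorphism is multiplication by its value at 1
  have hαlin : ∀ x : ZMod n, α x = α 1 * x := by
    intro x
    have hx : ((x.val : ℕ) : ZMod n) = x := ZMod.natCast_rightInverse x
    calc α x = α (x.val • (1 : ZMod n)) := by rw [nsmul_eq_mul, mul_one, hx]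
    _ = x.val • α 1 := by rw [map_nsmul]
    _ = ((x.val : ℕ) : ZMod n) * α 1 := by rw [nsmul_eq_mul]
    _ = α 1 * x := by rw [hx, mul_comm]
  have hCu : IsUnit (α 1) := by
    obtain ⟨y, hy⟩ := α.toEquiv.surjective 1
    refine IsUnit.of_mul_eq_one y ?_
    rw [← hαlin y]
    exact hy
  set Cu : (ZMod n)ˣ := hCu.unit with hCudef
  have hCuv : (Cu : ZMod n) = α 1 := hCu.unit_spec
  -- every element of X is affine with slope a power of Cu
  have haff : ∀ x : Equiv.Perm (ZMod n), x ∈ X →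
      ∃ (k : ℤ) (a : ZMod n), ∀ u, x u = ((Cu ^ k : (ZMod n)ˣ) : ZMod n) * u + a := by
    intro x hx
    rw [hX] at hx
    induction hx using Subgroup.closure_induction with
    | mem x hx =>
      rcases hx with ⟨a, rfl⟩ | hx
      · exact ⟨0, a, fun u => by simp [add_comm]⟩
      · refine ⟨1, 0, fun u => ?_⟩
        simp only [Set.mem_singleton_iff] at hx
        subst hx
        show α u = _
        rw [hαlin u, zpow_one, hCuv, add_zero]
    | one => exact ⟨0, 0, fun u => by simp⟩
    | mul x y hx hy ihx ihy =>
      obtain ⟨kx, ax, hkx⟩ := ihx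
      obtain ⟨ky, ay, hky⟩ := ihy
      refine ⟨kx + ky, ((Cu ^ kx : (ZMod n)ˣ) : ZMod n) * ay + ax, fun u => ?_⟩
      rw [Equiv.Perm.mul_apply, hky u, hkx, zpow_add, Units.val_mul]
      ring
    | inv x hx ih =>
      obtain ⟨k, a, hk⟩ := ih
      refine ⟨-k, -(((Cu ^ (-k) : (ZMod n)ˣ) : ZMod n) * a), fun u => ?_⟩
      apply x.injective
      rw [Equiv.Perm.coe_inv, Equiv.apply_symm_apply, hk]
      have hinv : ((Cu ^ k : (ZMod n)ˣ) : ZMod n) * ((Cu ^ (-k) : (ZMod n)ˣ) : ZMod n) = 1 := by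
        rw [← Units.val_mul, ← zpow_add, add_neg_cancel, zpow_zero, Units.val_one]
      calc u = (((Cu ^ k : (ZMod n)ˣ) : ZMod n) * ((Cu ^ (-k) : (ZMod n)ˣ) : ZMod n)) * u
            + (1 - ((Cu ^ k : (ZMod n)ˣ) : ZMod n) * ((Cu ^ (-k) : (ZMod n)ˣ) : ZMod n)) * a := by
              rw [hinv]; ring
        _ = _ := by ring
  -- canonical affine form for elements of Y
  have haffY : ∀ y : Equiv.Perm (ZMod n), y ∈ Y →
      IsUnit (y 1 - y 0) ∧ ∀ u, y u = (y 1 - y 0) * u + y 0 := by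
    intro y hy
    obtain ⟨k, a, hk⟩ := haff y (hYX hy)
    have h0 : y 0 = a := by rw [hk 0, mul_zero, zero_add]
    have h1 : y 1 - y 0 = ((Cu ^ k : (ZMod n)ˣ) : ZMod n) := by
      rw [hk 1, h0, mul_one, add_sub_cancel_right]
    exact ⟨h1 ▸ (Cu ^ k).isUnit, fun u => by rw [hk u, h1, h0]⟩
  -- membership preservation of orbits
  have hmemY : ∀ (O : Set (ZMod n)) (a : ZMod n), O = MulAction.orbit Y a →
      ∀ y ∈ Y, ∀ z ∈ O, y z ∈ O := by
    intro O a hOa y hy z hz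
    subst hOa
    obtain ⟨w, hw⟩ := hz
    exact ⟨(⟨y, hy⟩ : Y) * w, by rw [← hw]; rfl⟩
  -- translations in Y are trivial
  have htrans : ∀ y : Equiv.Perm (ZMod n), y ∈ Y → y 1 - y 0 = 1 → y = 1 := by
    intro y hy h1
    have haffy := (haffY y hy).2
    have haffy' : ∀ u, y u = u + y 0 := fun u => by rw [haffy u, h1, one_mul]
    have himg : (fun x => x + y 0) '' O₁ = O₁ := by
      ext z
      constructor
      · rintro ⟨x, hx, rfl⟩
        show x + y 0 ∈ O₁
        rw [← haffy' x]
        exact hmemY O₁ a₁ hA₁ y hy x hx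
      · intro hz
        refine ⟨y⁻¹ z, hmemY O₁ a₁ hA₁ y⁻¹ (inv_mem hy) z hz, ?_⟩
        show y⁻¹ z + y 0 = z
        rw [← haffy' (y⁻¹ z), Equiv.Perm.coe_inv, Equiv.apply_symm_apply]
    have hy0 : y 0 ∈ ({0} : Set (ZMod n)) := by rw [← hrad]; exact himg
    have hy0' : y 0 = 0 := hy0
    ext u
    rw [haffy' u, hy0', add_zero]
    rfl
  -- the homomorphism from Y to units
  have hUY : ∀ y : Y, IsUnit ((y : Equiv.Perm (ZMod n)) 1 - (y : Equiv.Perm (ZMod n)) 0) :=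
    fun y => (haffY y y.2).1
  let Φ : Y →* (ZMod n)ˣ :=
    { toFun := fun y => (hUY y).unit
      map_one' := by
        apply Units.ext
        rw [IsUnit.unit_spec]
        show (1 : Equiv.Perm (ZMod n)) 1 - (1 : Equiv.Perm (ZMod n)) 0 = 1
        simp
      map_mul' := by
        intro y z
        apply Units.ext
        rw [Units.val_mul, IsUnit.unit_spec, IsUnit.unit_spec, IsUnit.unit_spec]
        show ((y : Equiv.Perm (ZMod n)) * z) 1 - ((y : Equiv.Perm (ZMod n)) * z) 0 = _
        rw [Equiv.Perm.mul_apply, Equiv.Perm.mul_apply,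
          (haffY y y.2).2 ((z : Equiv.Perm (ZMod n)) 1), (haffY y y.2).2 ((z : Equiv.Perm (ZMod n)) 0)]
        ring
      }
  have hΦspec : ∀ y : Y, (Φ y : ZMod n) = (y : Equiv.Perm (ZMod n)) 1 - (y : Equiv.Perm (ZMod n)) 0 :=
    fun y => IsUnit.unit_spec _
  have hΦinj : Function.Injective Φ := by
    rw [injective_iff_map_eq_one]
    intro y hy1
    have h1 : (y : Equiv.Perm (ZMod n)) 1 - (y : Equiv.Perm (ZMod n)) 0 = 1 := by
      rw [← hΦspec y, hy1, Units.val_one]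
    exact Subtype.ext (htrans y y.2 h1)
  have hΦrange : ∀ y : Y, Φ y ∈ Subgroup.zpowers Cu := by
    intro y
    obtain ⟨k, a, hk⟩ := haff y (hYX y.2)
    refine ⟨k, ?_⟩
    apply Units.ext
    rw [hΦspec y, hk 1, hk 0, mul_zero, zero_add, mul_one]
    ring
  -- Y is cyclic
  have hcycZ : IsCyclic (Subgroup.zpowers Cu) := by
    constructor
    refine ⟨⟨Cu, Subgroup.mem_zpowers Cu⟩, ?_⟩
    rintro ⟨x, hx⟩
    obtain ⟨k, hk⟩ := Subgroup.mem_zpowers_iff.mp hx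
    refine ⟨k, ?_⟩
    apply Subtype.ext
    rw [SubgroupClass.coe_zpow]
    exact hk
  have hcycY : IsCyclic Y := by
    let Φ' : Y →* Subgroup.zpowers Cu := Φ.codRestrict _ hΦrange
    have hΦ'inj : Function.Injective Φ' := by
      intro y z h
      exact hΦinj (congrArg Subtype.val h)
    haveI := hcycZ
    haveI : IsCyclic Φ'.range := Subgroup.isCyclic _
    exact isCyclic_of_surjective (MonoidHom.ofInjective hΦ'inj).symm
      (MonoidHom.ofInjective hΦ'inj).symm.surjective
  obtain ⟨g₀, hg₀⟩ := hcycY.exists_generator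
  set g : Equiv.Perm (ZMod n) := (g₀ : Equiv.Perm (ZMod n)) with hgdef
  -- orbit characterization via g
  have horb : ∀ x z : ZMod n, z ∈ MulAction.orbit Y x ↔ ∃ k : ℤ, (g ^ k) x = z := by
    intro x z
    constructor
    · rintro ⟨y, rfl⟩
      obtain ⟨k, hk⟩ := Subgroup.mem_zpowers_iff.mp (hg₀ y)
      refine ⟨k, ?_⟩
      show (g ^ k) x = y • x
      have hsm : y • x = (y : Equiv.Perm (ZMod n)) x := rfl
      rw [hsm, ← hk, SubgroupClass.coe_zpow]
    · rintro ⟨k, rfl⟩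
      refine ⟨g₀ ^ k, ?_⟩
      show (g₀ ^ k) • x = (g ^ k) x
      have hsm : (g₀ ^ k) • x = ((g₀ ^ k : Y) : Equiv.Perm (ZMod n)) x := rfl
      rw [hsm, SubgroupClass.coe_zpow]
  have hOrbgen : ∀ (O : Set (ZMod n)) (a : ZMod n), O = MulAction.orbit Y a →
      ∀ x ∈ O, ∀ z, ((∃ k : ℤ, (g ^ k) x = z) ↔ z ∈ O) := by
    intro O a hOa x hx z
    subst hOa
    have hx' : MulAction.orbit Y x = MulAction.orbit Y a := MulAction.orbit_eq_iff.mpr hx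
    rw [← hx']
    exact (horb x z).symm
  -- g is affine
  obtain ⟨hBu, hgaff⟩ := haffY g g₀.2
  set B : (ZMod n)ˣ := hBu.unit with hBdef
  set A : ZMod n := g 0 with hAdef
  have hg : ∀ u, g u = (B : ZMod n) * u + A := by
    intro u
    rw [hBu.unit_spec]
    exact hgaff u
  clear hgaff hBdef
  -- now the number-theoretic part: suppose n is not a prime power
  by_contra hnpp
  have hn0 : n ≠ 0 := NeZero.ne n
  have hn1 : n ≠ 1 := by
    intro h
    haveI hsub : Subsingleton (ZMod n) := by rw [h]; infer_instance
    have he : a₂ = a₁ := Subsingleton.elim a₂ a₁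
    rw [he] at ha₂
    exact Set.disjoint_left.mp hdisj ha₁ ha₂
  set p := n.minFac with hpdef
  have hp : p.Prime := Nat.minFac_prime hn1
  have hpdvd : p ∣ n := Nat.minFac_dvd n
  set n₁ := p ^ (n.factorization p) with hn₁def
  set n₂ := n / n₁ with hn₂def
  have hn : n = n₁ * n₂ := (Nat.ordProj_mul_ordCompl_eq_self n p).symm
  have hcop : Nat.Coprime n₁ n₂ :=
    Nat.Coprime.pow_left _ (Nat.coprime_ordCompl hp hn0)
  have hk0pos : 0 < n.factorization p := hp.factorization_pos_of_dvd hn0 hpdvd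
  have h1 : 1 < n₁ := by
    rw [hn₁def]
    exact Nat.one_lt_pow hk0pos.ne' hp.one_lt
  have h2 : 1 < n₂ := by
    rcases Nat.lt_or_ge 1 n₂ with h | h
    · exact h
    · exfalso
      interval_cases n₂
      · simp [hn] at hn0
      · exact hnpp ⟨p, n.factorization p, hp.prime, hk0pos, by rw [mul_one] at hn; exact hn.symm⟩
  haveI : NeZero n₁ := ⟨by omega⟩
  haveI : NeZero n₂ := ⟨by omega⟩
  haveI : Fact (1 < n₁) := ⟨h1⟩
  haveI : Fact (1 < n₂) := ⟨h2⟩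
  have hd₁ : n₁ ∣ n := ⟨n₂, hn⟩
  have hd₂ : n₂ ∣ n := ⟨n₁, by rw [hn, mul_comm]⟩
  set ρ₁ : ZMod n →+* ZMod n₁ := ZMod.castHom hd₁ (ZMod n₁) with hρ₁def
  set ρ₂ : ZMod n →+* ZMod n₂ := ZMod.castHom hd₂ (ZMod n₂) with hρ₂def
  -- joint injectivity
  have hjinj : ∀ x x' : ZMod n, ρ₁ x = ρ₁ x' → ρ₂ x = ρ₂ x' → x = x' := by
    intro x x' e1 e2
    have e1' : ρ₁ (x - x') = 0 := by rw [map_sub, e1, sub_self]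
    have e2' : ρ₂ (x - x') = 0 := by rw [map_sub, e2, sub_self]
    set z := x - x' with hzdef
    have hv : ((z.val : ℕ) : ZMod n) = z := ZMod.natCast_rightInverse z
    have f1 : ((z.val : ℕ) : ZMod n₁) = 0 := by rw [← map_natCast ρ₁ z.val, hv]; exact e1'
    have f2 : ((z.val : ℕ) : ZMod n₂) = 0 := by rw [← map_natCast ρ₂ z.val, hv]; exact e2'
    have d1 : n₁ ∣ z.val := (ZMod.natCast_eq_zero_iff _ _).mp f1
    have d2 : n₂ ∣ z.val := (ZMod.natCast_eq_zero_iff _ _).mp f2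
    have dn : n ∣ z.val := by
      have dn' : n₁ * n₂ ∣ z.val := Nat.Coprime.mul_dvd_of_dvd_of_dvd hcop d1 d2
      rwa [← hn] at dn'
    have : z = 0 := by rw [← hv]; exact (ZMod.natCast_eq_zero_iff _ _).mpr dn
    rw [hzdef] at this
    exact sub_eq_zero.mp this
  -- pair surjectivity via cardinality
  have hpairsurj : ∀ (y₁ : ZMod n₁) (y₂ : ZMod n₂), ∃ x, ρ₁ x = y₁ ∧ ρ₂ x = y₂ := by
    have hinj : Function.Injective (fun x : ZMod n => (ρ₁ x, ρ₂ x)) := by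
      intro x x' h
      exact hjinj x x' (congrArg Prod.fst h) (congrArg Prod.snd h)
    have hcards : Fintype.card (ZMod n) = Fintype.card (ZMod n₁ × ZMod n₂) := by
      rw [Fintype.card_prod, ZMod.card, ZMod.card, ZMod.card, hn]
    have hbij := (Fintype.bijective_iff_injective_and_card _).mpr ⟨hinj, hcards⟩
    intro y₁ y₂
    obtain ⟨x, hx⟩ := hbij.2 (y₁, y₂)
    exact ⟨x, congrArg Prod.fst hx, congrArg Prod.snd hx⟩
  have hρ₁s : Function.Surjective ⇑ρ₁ := fun y => (hpairsurj y 0).imp fun x h => h.1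
  have hρ₂s : Function.Surjective ⇑ρ₂ := fun y => (hpairsurj 0 y).imp fun x h => h.2
  obtain ⟨u₁, hu₁₁, hu₁₂⟩ := hpairsurj 1 0
  obtain ⟨u₂, hu₂₁, hu₂₂⟩ := hpairsurj 0 1
  have hu₁ne : u₁ ≠ 0 := by
    intro h
    rw [h, map_zero] at hu₁₁
    exact one_ne_zero hu₁₁.symm
  have hu₂ne : u₂ ≠ 0 := by
    intro h
    rw [h, map_zero] at hu₂₂
    exact one_ne_zero hu₂₂.symm
  -- induced affine permutations
  have hhat : ∀ (m : ℕ) (ρ : ZMod n →+* ZMod m),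
      ∃ gh : Equiv.Perm (ZMod m), ∀ x, ρ (g x) = gh (ρ x) := by
    intro m ρ
    refine ⟨(MulAction.toPerm (Units.map ρ.toMonoidHom B)).trans (Equiv.addRight (ρ A)), ?_⟩
    intro x
    rw [hg x]
    simp [Units.smul_def, Units.coe_map, Equiv.coe_addRight]
  obtain ⟨gh₁, hsemi₁⟩ := hhat n₁ ρ₁
  obtain ⟨gh₂, hsemi₂⟩ := hhat n₂ ρ₂
  -- the key "one side not transitive" contradiction
  have hside : ∀ (m : ℕ) (ρ : ZMod n →+* ZMod m) (gh : Equiv.Perm (ZMod m)),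
      (∀ x, ρ (g x) = gh (ρ x)) → Function.Surjective ⇑ρ →
      ∀ u : ZMod n, u ≠ 0 → ρ u = 0 →
      (¬ ∀ w z : ZMod m, ∃ k : ℤ, (gh ^ k) w = z) → False := by
    intro m ρ gh hsemi hρs u hu hρu hnt
    push_neg at hnt
    obtain ⟨w, z, hwz⟩ := hnt
    set S : Set (ZMod m) := {v | ∃ k : ℤ, (gh ^ k) w = v} with hSdef
    have hwS : w ∈ S := ⟨0, rfl⟩
    have hzS : z ∉ S := fun hk => by obtain ⟨k, hk⟩ := hk; exact hwz k hk
    have hSf : ∀ v ∈ S, gh v ∈ S := by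
      rintro v ⟨k, rfl⟩
      refine ⟨1 + k, ?_⟩
      rw [zpow_add, zpow_one, Equiv.Perm.mul_apply]
    have hSb : ∀ v ∈ S, gh⁻¹ v ∈ S := by
      rintro v ⟨k, rfl⟩
      refine ⟨-1 + k, ?_⟩
      rw [zpow_add, zpow_neg_one, Equiv.Perm.mul_apply]
    have hT : ∀ x, ρ x ∈ S → ∀ k : ℤ, ρ ((g ^ k) x) ∈ S := by
      intro x hx k
      rw [perm_semiconj_zpow g gh ⇑ρ hsemi k x]
      exact set_inv_zpow gh S hSf hSb k _ hx
    have hTc : ∀ x, ρ x ∉ S → ∀ k : ℤ, ρ ((g ^ k) x) ∉ S := by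
      intro x hx k hmem
      apply hx
      have hxx : (g ^ (-k)) ((g ^ k) x) = x := by
        rw [← Equiv.Perm.mul_apply, ← zpow_add, neg_add_cancel, zpow_zero, Equiv.Perm.one_apply]
      have := hT _ hmem (-k)
      rwa [hxx] at this
    have hOsub : ∀ (O : Set (ZMod n)) (a : ZMod n), O = MulAction.orbit Y a → ∀ x ∈ O,
        (ρ x ∈ S → ∀ x' ∈ O, ρ x' ∈ S) ∧ (ρ x ∉ S → ∀ x' ∈ O, ρ x' ∉ S) := by
      intro O a hOa x hx
      constructor <;> intro hxS x' hx'
      · obtain ⟨k, hk⟩ := (hOrbgen O a hOa x hx x').mpr hx'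
        rw [← hk]; exact hT x hxS k
      · obtain ⟨k, hk⟩ := (hOrbgen O a hOa x hx x').mpr hx'
        rw [← hk]; exact hTc x hxS k
    obtain ⟨x₀, hx₀⟩ := hρs w
    obtain ⟨x₁, hx₁⟩ := hρs z
    have hx₀S : ρ x₀ ∈ S := by rw [hx₀]; exact hwS
    have hx₁S : ρ x₁ ∉ S := by rw [hx₁]; exact hzS
    have hx₀m : x₀ ∈ O₁ ∪ O₂ := by rw [hcover]; trivial
    have hx₁m : x₁ ∈ O₁ ∪ O₂ := by rw [hcover]; trivial
    have hsat : ∀ x x', ρ x = ρ x' → (x ∈ O₁ ↔ x' ∈ O₁) := by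
      rcases hx₀m with h0 | h0 <;> rcases hx₁m with hh1 | hh1
      · exact absurd ((hOsub O₁ a₁ hA₁ x₀ h0).1 hx₀S x₁ hh1) hx₁S
      · -- O₁ ⊆ ρ⁻¹ S, O₂ ⊆ ρ⁻¹ Sᶜ
        have hin : ∀ x, x ∈ O₁ ↔ ρ x ∈ S := by
          intro x
          constructor
          · intro hx; exact (hOsub O₁ a₁ hA₁ x₀ h0).1 hx₀S x hx
          · intro hx
            have : x ∈ O₁ ∪ O₂ := by rw [hcover]; trivial
            rcases this with h | h
            · exact h
            · exact absurd hx ((hOsub O₂ a₂ hA₂ x₁ hh1).2 hx₁S x h)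
        intro x x' he
        rw [hin x, hin x', he]
      · have hin : ∀ x, x ∈ O₁ ↔ ρ x ∉ S := by
          intro x
          constructor
          · intro hx; exact (hOsub O₁ a₁ hA₁ x₁ hh1).2 hx₁S x hx
          · intro hx
            have : x ∈ O₁ ∪ O₂ := by rw [hcover]; trivial
            rcases this with h | h
            · exact h
            · exact absurd ((hOsub O₂ a₂ hA₂ x₀ h0).1 hx₀S x h) hx
        intro x x' he
        rw [hin x, hin x', he]
      · exact absurd ((hOsub O₂ a₂ hA₂ x₀ h0).1 hx₀S x₁ hh1) hx₁S
    have himg : (fun x => x + u) '' O₁ = O₁ := by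
      ext v
      constructor
      · rintro ⟨x, hx, rfl⟩
        show x + u ∈ O₁
        exact (hsat x (x + u) (by rw [map_add, hρu, add_zero])).mp hx
      · intro hv
        refine ⟨v - u, (hsat v (v - u) (by rw [map_sub, hρu, sub_zero])).mp hv, ?_⟩
        show v - u + u = v
        ring
    have hu0 : u ∈ ({0} : Set (ZMod n)) := by rw [← hrad]; exact himg
    exact hu hu0
  -- fixed points of transtive induced maps
  have hfix : ∀ (m : ℕ), NeZero m → ∀ (f : Equiv.Perm (ZMod m)),
      (∀ w z : ZMod m, ∃ k : ℤ, (f ^ k) w = z) →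
      ∀ (t : ℤ), (m : ℤ) ∣ t → ∀ v : ZMod m, (f ^ t) v = v := by
    intro m hm f hf t ht v
    haveI := hm
    obtain ⟨s, hs⟩ := ht
    have h1 : (f ^ (m : ℕ)) v = v := by
      have := perm_card_fix f v (hf v)
      rwa [ZMod.card] at this
    rw [hs, zpow_mul, zpow_natCast]
    exact perm_fix_zpow _ h1 s
  by_cases ht₁ : ∀ w z : ZMod n₁, ∃ k : ℤ, (gh₁ ^ k) w = z
  · by_cases ht₂ : ∀ w z : ZMod n₂, ∃ k : ℤ, (gh₂ ^ k) w = z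
    · -- both induced maps transitive : g is transitive, contradicting two orbits
      obtain ⟨k₁, hk₁⟩ := ht₁ (ρ₁ a₁) (ρ₁ a₂)
      obtain ⟨k₂, hk₂⟩ := ht₂ (ρ₂ a₁) (ρ₂ a₂)
      have hcopZ : IsCoprime (n₁ : ℤ) (n₂ : ℤ) := Nat.isCoprime_iff_coprime.mpr hcop
      obtain ⟨c, d, hcd⟩ := hcopZ
      set k : ℤ := k₁ + (k₂ - k₁) * (c * n₁) with hkdef
      have hdvd₁ : (n₁ : ℤ) ∣ k - k₁ := ⟨(k₂ - k₁) * c, by rw [hkdef]; ring⟩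
      have hdvd₂ : (n₂ : ℤ) ∣ k - k₂ := ⟨(k₁ - k₂) * d, by rw [hkdef]; linear_combination (k₂ - k₁) * hcd⟩
      have hk₁' : (gh₁ ^ k) (ρ₁ a₁) = ρ₁ a₂ := by
        have hsplit : gh₁ ^ k = gh₁ ^ (k - k₁) * gh₁ ^ k₁ := by
          rw [← zpow_add]; ring_nf
        rw [hsplit, Equiv.Perm.mul_apply, hk₁]
        exact hfix n₁ ‹NeZero n₁› gh₁ ht₁ (k - k₁) hdvd₁ (ρ₁ a₂)
      have hk₂' : (gh₂ ^ k) (ρ₂ a₁) = ρ₂ a₂ := by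
        have hsplit : gh₂ ^ k = gh₂ ^ (k - k₂) * gh₂ ^ k₂ := by
          rw [← zpow_add]; ring_nf
        rw [hsplit, Equiv.Perm.mul_apply, hk₂]
        exact hfix n₂ ‹NeZero n₂› gh₂ ht₂ (k - k₂) hdvd₂ (ρ₂ a₂)
      have hga : (g ^ k) a₁ = a₂ := by
        apply hjinj
        · rw [perm_semiconj_zpow g gh₁ ⇑ρ₁ hsemi₁ k a₁, hk₁']
        · rw [perm_semiconj_zpow g gh₂ ⇑ρ₂ hsemi₂ k a₁, hk₂']
      have ha₂O₁ : a₂ ∈ O₁ := (hOrbgen O₁ a₁ hA₁ a₁ ha₁ a₂).mp ⟨k, hga⟩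
      exact Set.disjoint_left.mp hdisj ha₂O₁ ha₂
    · exact hside n₂ ρ₂ gh₂ hsemi₂ hρ₂s u₁ hu₁ne hu₁₂ ht₂
  · exact hside n₁ ρ₁ gh₁ hsemi₁ hρ₁s u₂ hu₂ne hu₂₁ ht₁
end

section
/- Let X = ℤ/nℤ ⋊ ⟨α⟩ act affinely on ℤ/nℤ, and let Y ≤ X have exactly two orbits O_1, O_2 with rad(O_1) trivial. If p is a prime divisor of n and P is the unique subgroup of order p of ℤ/nℤ, then every coset of P meets both O_1 and O_2 nontrivially. -/
theorem stmt_8 (n : ℕ) [NeZero n] (α : AddAut (ZMod n))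
    (X : Subgroup (Equiv.Perm (ZMod n)))
    (hX : X = Subgroup.closure
      ((Set.range fun a : ZMod n => Equiv.addLeft a) ∪ {α.toEquiv}))
    (Y : Subgroup (Equiv.Perm (ZMod n))) (hYX : Y ≤ X)
    (O₁ O₂ : Set (ZMod n))
    (hO₁ : ∃ a, O₁ = MulAction.orbit Y a) (hO₂ : ∃ a, O₂ = MulAction.orbit Y a)
    (hcover : O₁ ∪ O₂ = Set.univ) (hdisj : Disjoint O₁ O₂)
    (hrad : {u : ZMod n | (fun x => x + u) '' O₁ = O₁} = {0})
    (p : ℕ) (hp : p.Prime) (hpn : p ∣ n)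
    (P : AddSubgroup (ZMod n)) (hP : P = AddSubgroup.zmultiples ((n / p : ℕ) : ZMod n)) :
    ∀ x : ZMod n,
      ((fun u => x + u) '' (P : Set (ZMod n)) ∩ O₁).Nonempty ∧
        ((fun u => x + u) '' (P : Set (ZMod n)) ∩ O₂).Nonempty := by
  have hn : n ≠ 0 := NeZero.ne n
  have hnpos : 0 < n := Nat.pos_of_ne_zero hn
  set g : ZMod n := ((n / p : ℕ) : ZMod n) with hg
  -- membership in P is characterized by p-torsion
  have hmemP : ∀ u : ZMod n, u ∈ P ↔ p • u = 0 := by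
    intro u
    subst hP
    constructor
    · rintro ⟨k, rfl⟩
      have hpg : p • g = 0 := by
        have h1 : (p * (n / p) : ℕ) = n := Nat.mul_div_cancel' hpn
        have : (p • g) = ((p * (n / p) : ℕ) : ZMod n) := by
          push_cast; ring
        rw [this, h1, ZMod.natCast_self]
      rw [smul_comm, hpg, smul_zero]
    · intro hu
      have hval : ((u.val : ZMod n)) = u := by simp [ZMod.natCast_val, ZMod.cast_id]
      have h2 : ((p * u.val : ℕ) : ZMod n) = 0 := by
        push_cast [hval]
        rw [← nsmul_eq_mul]; exact hu
      have h3 : n ∣ p * u.val := (ZMod.natCast_eq_zero_iff _ n).mp h2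
      have h4 : p * (n / p) ∣ p * u.val := by
        rwa [Nat.mul_div_cancel' hpn]
      have h5 : (n / p) ∣ u.val := (Nat.mul_dvd_mul_iff_left hp.pos).mp h4
      obtain ⟨k, hk⟩ := h5
      refine ⟨(k : ℤ), ?_⟩
      have : ((k : ℤ) • g) = (((n / p) * k : ℕ) : ZMod n) := by
        rw [zsmul_eq_mul]; push_cast; ring
      show (k : ℤ) • g = u
      rw [this, ← hk, hval]
  -- every element of X respects cosets of P
  have hK : ∀ f ∈ X, ∀ a b : ZMod n, f a - f b ∈ P ↔ a - b ∈ P := by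
    subst hX
    intro f hf
    induction hf using Subgroup.closure_induction with
    | mem f hf =>
        rcases hf with ⟨a, rfl⟩ | hf
        · intro x y
          simp only [Equiv.coe_addLeft]
          rw [show a + x - (a + y) = x - y by ring]
        · simp only [Set.mem_singleton_iff] at hf
          subst hf
          intro x y
          have h1 : α.toEquiv x - α.toEquiv y = α (x - y) := (map_sub α x y).symm
          rw [h1]
          rw [hmemP, hmemP]
          constructor
          · intro h
            have : α (p • (x - y)) = α 0 := by
              rw [map_nsmul, map_zero]; exact h
            exact α.injective this
          · intro h
            rw [← map_nsmul, h, map_zero]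
    | one => intro x y; simp
    | mul f f' _ _ hf hf' =>
        intro x y
        rw [show (f * f') x = f (f' x) from rfl, show (f * f') y = f (f' y) from rfl,
          hf, hf']
    | inv f _ hf =>
        intro x y
        have := hf (f⁻¹ x) (f⁻¹ y)
        simpa using this.symm
  -- key step: if a coset of P is inside an orbit O, then O is a union of cosets
  have key : ∀ (x a : ZMod n) (O : Set (ZMod n)), O = MulAction.orbit Y a →
      (∀ u ∈ P, x + u ∈ O) → ∀ b ∈ O, ∀ u ∈ P, b + u ∈ O := by
    intro x a O hO hsub b hb u hu
    have hx : x ∈ O := by simpa using hsub 0 (zero_mem P)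
    subst hO
    have horb : MulAction.orbit Y x = MulAction.orbit Y a :=
      (MulAction.orbit_eq_iff).mpr hx
    rw [← horb] at hb ⊢
    obtain ⟨y, rfl⟩ := hb
    set z : ZMod n := (y : Equiv.Perm (ZMod n))⁻¹ (y • x + u) with hz
    have hyx : (y : Equiv.Perm (ZMod n))⁻¹ (y • x) = x := by
      show (y : Equiv.Perm (ZMod n))⁻¹ ((y : Equiv.Perm (ZMod n)) x) = x
      simp
    have hzx : z - x ∈ P := by
      rw [← hyx]
      rw [hK _ (hYX (inv_mem y.2)) (y • x + u) (y • x)]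
      simpa using hu
    have hzO : z ∈ MulAction.orbit Y x := by
      have h := hsub (z - x) hzx
      rw [← horb] at h
      have hzz : x + (z - x) = z := by ring
      rwa [hzz] at h
    have heq : y • x + u = y • z := by
      show y • x + u = (y : Equiv.Perm (ZMod n)) z
      rw [hz]; simp
    obtain ⟨y', hy'⟩ := hzO
    simp only at hy'
    rw [heq, ← hy', smul_smul]
    exact MulAction.mem_orbit x (y * y')
  -- g is a nonzero element of P
  have hgP : g ∈ P := by rw [hP]; exact AddSubgroup.mem_zmultiples g
  have hgne : g ≠ 0 := by
    intro h0
    have hdvd : n ∣ n / p := (ZMod.natCast_eq_zero_iff _ n).mp h0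
    have h1 : n / p < n := Nat.div_lt_self hnpos hp.one_lt
    have h2 : 0 < n / p := Nat.div_pos (Nat.le_of_dvd hnpos hpn) hp.pos
    exact absurd (Nat.le_of_dvd h2 hdvd) (not_le.mpr h1)
  intro x
  -- if O₁ is closed under adding elements of P, contradiction with hrad
  have hstepcon : ∀ (hstep : ∀ b ∈ O₁, ∀ u ∈ P, b + u ∈ O₁), False := by
    intro hstep
    have himg : (fun z => z + g) '' O₁ = O₁ := by
      apply Set.Subset.antisymm
      · rintro _ ⟨b, hb, rfl⟩
        exact hstep b hb g hgP
      · intro b hb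
        exact ⟨b + -g, hstep b hb (-g) (neg_mem hgP), by ring⟩
    have hgmem : g ∈ {u : ZMod n | (fun x => x + u) '' O₁ = O₁} := himg
    rw [hrad] at hgmem
    exact hgne hgmem
  have hcontr1 : ¬ (∀ u ∈ P, x + u ∈ O₁) := by
    intro hsub
    obtain ⟨a, ha⟩ := hO₁
    exact hstepcon (key x a O₁ ha hsub)
  have hcontr2 : ¬ (∀ u ∈ P, x + u ∈ O₂) := by
    intro hsub
    obtain ⟨a, ha⟩ := hO₂
    have hstep2 := key x a O₂ ha hsub
    apply hstepcon
    intro b hb u hu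
    have huniv : b + u ∈ O₁ ∪ O₂ := hcover ▸ Set.mem_univ _
    rcases huniv with h | h
    · exact h
    · exfalso
      have hbO₂ : b ∈ O₂ := by
        have := hstep2 (b + u) h (-u) (neg_mem hu)
        rwa [show b + u + -u = b by ring] at this
      exact Set.disjoint_left.mp hdisj hb hbO₂
  constructor
  · by_contra h
    rw [Set.not_nonempty_iff_eq_empty] at h
    apply hcontr2
    intro u hu
    have hmem : x + u ∈ (fun u => x + u) '' (P : Set (ZMod n)) := ⟨u, hu, rfl⟩
    have hnot : x + u ∉ O₁ := fun hin =>
      Set.eq_empty_iff_forall_notMem.mp h (x + u) ⟨hmem, hin⟩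
    have huniv : x + u ∈ O₁ ∪ O₂ := hcover ▸ Set.mem_univ _
    rcases huniv with h' | h'
    · exact absurd h' hnot
    · exact h'
  · by_contra h
    rw [Set.not_nonempty_iff_eq_empty] at h
    apply hcontr1
    intro u hu
    have hmem : x + u ∈ (fun u => x + u) '' (P : Set (ZMod n)) := ⟨u, hu, rfl⟩
    have hnot : x + u ∉ O₂ := fun hin =>
      Set.eq_empty_iff_forall_notMem.mp h (x + u) ⟨hmem, hin⟩
    have huniv : x + u ∈ O₁ ∪ O₂ := hcover ▸ Set.mem_univ _
    rcases huniv with h' | h'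
    · exact h'
    · exact absurd h' hnot
end

section
/- Let X = ℤ/nℤ ⋊ ⟨α⟩ act affinely on ℤ/nℤ, and let Y ≤ X have exactly two orbits O_1, O_2 on ℤ/nℤ with rad(O_1) trivial. Then for every prime p dividing n, n/p divides both |O_1| and |O_2|. -/
theorem stmt_9 (n : ℕ) [NeZero n] (α : AddAut (ZMod n))
    (X : Subgroup (Equiv.Perm (ZMod n)))
    (hX : X = Subgroup.closure
      ((Set.range fun a : ZMod n => Equiv.addLeft a) ∪ {α.toEquiv}))
    (Y : Subgroup (Equiv.Perm (ZMod n))) (hYX : Y ≤ X)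
    (O₁ O₂ : Set (ZMod n))
    (hO₁ : ∃ a, O₁ = MulAction.orbit Y a) (hO₂ : ∃ a, O₂ = MulAction.orbit Y a)
    (hcover : O₁ ∪ O₂ = Set.univ) (hdisj : Disjoint O₁ O₂)
    (hrad : {u : ZMod n | (fun x => x + u) '' O₁ = O₁} = {0}) :
    ∀ p : ℕ, p.Prime → p ∣ n → n / p ∣ O₁.ncard ∧ n / p ∣ O₂.ncard := by
  classical
  intro p hp hpn
  have hn : n ≠ 0 := NeZero.ne n
  set m := n / p with hmdef
  have hmn : m ∣ n := Nat.div_dvd_of_dvd hpn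
  have hmlt : m < n := Nat.div_lt_self (Nat.pos_of_ne_zero hn) hp.one_lt
  have hm0 : m ≠ 0 := by
    rcases hpn with ⟨k, hk⟩
    have : m = k := by rw [hmdef, hk, Nat.mul_div_cancel_left _ hp.pos]
    rw [this]
    rintro rfl
    exact hn (by simpa using hk)
  haveI : NeZero m := ⟨hm0⟩
  set π : ZMod n →+* ZMod m := ZMod.castHom hmn (ZMod m) with hπdef
  -- every additive automorphism of `ZMod n` is multiplication by a unit
  have key : ∀ (β : AddAut (ZMod n)) (x : ZMod n), β x = x * β 1 := by
    intro β x
    have h1 : ((x.val : ℕ) : ZMod n) = x := by rw [ZMod.natCast_val, ZMod.cast_id]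
    calc β x = β (x.val • (1 : ZMod n)) := by rw [nsmul_eq_mul, mul_one, h1]
      _ = x.val • β 1 := by rw [map_nsmul]
      _ = x * β 1 := by rw [nsmul_eq_mul, h1]
  -- Lemma A : every element of Y descends along π
  have hA : ∀ g : Equiv.Perm (ZMod n), g ∈ Y →
      ∃ φ : Equiv.Perm (ZMod m), ∀ x, π (g x) = φ (π x) := by
    intro g hg
    have hgX : g ∈ X := hYX hg
    rw [hX] at hgX
    clear hg
    induction hgX using Subgroup.closure_induction with
    | mem x hx =>
      simp only [Set.mem_union, Set.mem_range, Set.mem_singleton_iff] at hx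
      rcases hx with ⟨a, rfl⟩ | rfl
      · exact ⟨Equiv.addLeft (π a), fun x => by simp [map_add]⟩
      · have hcc' : α 1 * (-α : AddAut (ZMod n)) 1 = 1 := by
          have h2 : (-α : AddAut (ZMod n)) (α 1) = 1 := by
            simp [AddAut.neg_def]
          rw [key (-α) (α 1)] at h2
          exact h2
        refine ⟨⟨fun z => z * π (α 1), fun z => z * π ((-α : AddAut (ZMod n)) 1),
          fun z => ?_, fun z => ?_⟩, fun x => ?_⟩
        · simp only [mul_assoc, ← map_mul, hcc', map_one, mul_one]
        · simp only [mul_assoc, ← map_mul, mul_comm ((-α : AddAut (ZMod n)) 1) (α 1),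
            hcc', map_one, mul_one]
        · show π (α x) = π x * π (α 1)
          rw [key α x, map_mul]
    | one => exact ⟨1, fun x => rfl⟩
    | mul a b _ _ iha ihb =>
      obtain ⟨φa, hφa⟩ := iha
      obtain ⟨φb, hφb⟩ := ihb
      exact ⟨φa * φb, fun x => by
        rw [Equiv.Perm.mul_apply, Equiv.Perm.mul_apply, hφa, hφb]⟩
    | inv a _ iha =>
      obtain ⟨φ, hφ⟩ := iha
      refine ⟨φ⁻¹, fun x => φ.injective ?_⟩
      rw [← hφ]
      show π (a (a⁻¹ x)) = φ (φ⁻¹ (π x))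
      simp
  -- invariance of orbits
  have hInv : ∀ (O : Set (ZMod n)) (a : ZMod n), O = MulAction.orbit Y a →
      ∀ g : Equiv.Perm (ZMod n), g ∈ Y → ∀ x ∈ O, g x ∈ O := by
    intro O a hO g hg x hx
    subst hO
    obtain ⟨y, rfl⟩ := hx
    refine ⟨⟨g, hg⟩ * y, ?_⟩
    show (⟨g, hg⟩ * y : Y) • a = g (y • a)
    rw [mul_smul]
    rfl
  -- transitivity inside an orbit
  have hTrans : ∀ (O : Set (ZMod n)) (a : ZMod n), O = MulAction.orbit Y a →
      ∀ x ∈ O, ∀ y ∈ O, ∃ h : Y, (↑h : Equiv.Perm (ZMod n)) x = y := by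
    intro O a hO x hx y hy
    subst hO
    obtain ⟨gx, rfl⟩ := hx
    obtain ⟨gy, rfl⟩ := hy
    refine ⟨gy * gx⁻¹, ?_⟩
    show (gy * gx⁻¹ : Y) • (gx • a) = gy • a
    rw [smul_smul, inv_mul_cancel_right]
  -- fibers over a single orbit's image are equinumerous
  have hFiber : ∀ (O : Set (ZMod n)) (a : ZMod n), O = MulAction.orbit Y a →
      ∀ z z' : ZMod m, z ∈ π '' O → z' ∈ π '' O →
      (O ∩ π ⁻¹' {z}).ncard = (O ∩ π ⁻¹' {z'}).ncard := by
    intro O a hO z z' hz hz'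
    obtain ⟨x, hxO, hxz⟩ := hz
    obtain ⟨x', hx'O, hx'z⟩ := hz'
    obtain ⟨h, hhx⟩ := hTrans O a hO x hxO x' hx'O
    obtain ⟨φ, hφ⟩ := hA ↑h h.2
    have hφz : φ z = z' := by rw [← hxz, ← hφ, hhx, hx'z]
    have himg : (↑h : Equiv.Perm (ZMod n)) '' (O ∩ π ⁻¹' {z}) = O ∩ π ⁻¹' {z'} := by
      ext y
      constructor
      · rintro ⟨w, ⟨hwO, hwz⟩, rfl⟩
        refine ⟨hInv O a hO ↑h h.2 w hwO, ?_⟩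
        simp only [Set.mem_preimage, Set.mem_singleton_iff] at hwz ⊢
        rw [hφ, hwz, hφz]
      · rintro ⟨hyO, hyz⟩
        simp only [Set.mem_preimage, Set.mem_singleton_iff] at hyz
        have h1 : (↑h : Equiv.Perm (ZMod n))⁻¹ y ∈ O := by
          have := hInv O a hO ↑(h⁻¹) (h⁻¹).2 y hyO
          simpa using this
        have h2 : π ((↑h : Equiv.Perm (ZMod n))⁻¹ y) = z := by
          apply φ.injective
          rw [← hφ]
          simp [hyz, hφz]
        exact ⟨(↑h : Equiv.Perm (ZMod n))⁻¹ y, ⟨h1, by simpa using h2⟩, by simp⟩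
    calc (O ∩ π ⁻¹' {z}).ncard
        = ((↑h : Equiv.Perm (ZMod n)) '' (O ∩ π ⁻¹' {z})).ncard :=
          (Set.ncard_image_of_injective _ (Equiv.injective _)).symm
      _ = (O ∩ π ⁻¹' {z'}).ncard := by rw [himg]
  -- counting lemma
  have hCount : ∀ (O : Set (ZMod n)) (a : ZMod n), O = MulAction.orbit Y a →
      π '' O = Set.univ → m ∣ O.ncard := by
    intro O a hO himg
    have h1 : O.ncard = O.toFinset.card := Set.ncard_eq_toFinset_card' O
    have h2 : O.toFinset.card
        = ∑ z : ZMod m, (O.toFinset.filter (fun x => π x = z)).card :=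
      Finset.card_eq_sum_card_fiberwise (fun x _ => Finset.mem_univ _)
    have h3 : ∀ z : ZMod m, (O.toFinset.filter (fun x => π x = z)).card
        = (O ∩ π ⁻¹' {(0 : ZMod m)}).ncard := by
      intro z
      have hz : z ∈ π '' O := himg ▸ Set.mem_univ z
      have h0 : (0 : ZMod m) ∈ π '' O := himg ▸ Set.mem_univ 0
      rw [← hFiber O a hO z 0 hz h0, Set.ncard_eq_toFinset_card']
      congr 1
      ext x
      simp [Set.mem_toFinset]
    rw [h1, h2, Finset.sum_congr rfl (fun z _ => h3 z), Finset.sum_const,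
      Finset.card_univ, ZMod.card, smul_eq_mul]
    exact dvd_mul_right _ _
  obtain ⟨a₁, ha₁⟩ := hO₁
  obtain ⟨a₂, ha₂⟩ := hO₂
  by_cases hcap : (π '' O₁ ∩ π '' O₂).Nonempty
  · obtain ⟨z, hz₁, hz₂⟩ := hcap
    have hsurj : Function.Surjective π := by
      intro w
      refine ⟨((w.val : ℕ) : ZMod n), ?_⟩
      rw [map_natCast, ZMod.natCast_val, ZMod.cast_id]
    have hsub : ∀ (Oa Ob : Set (ZMod n)) (aa ab : ZMod n),
        Oa = MulAction.orbit Y aa → Ob = MulAction.orbit Y ab →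
        z ∈ π '' Oa → z ∈ π '' Ob → π '' Ob ⊆ π '' Oa := by
      intro Oa Ob aa ab hOa hOb hza hzb w hw
      obtain ⟨y, hyb, rfl⟩ := hw
      obtain ⟨x, hxb, hxz⟩ := hzb
      obtain ⟨x', hxa, hx'z⟩ := hza
      obtain ⟨h, hhx⟩ := hTrans Ob ab hOb x hxb y hyb
      obtain ⟨φ, hφ⟩ := hA ↑h h.2
      refine ⟨(↑h : Equiv.Perm (ZMod n)) x', hInv Oa aa hOa ↑h h.2 x' hxa, ?_⟩
      rw [hφ, hx'z, ← hxz, ← hφ, hhx]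
    have h12 : π '' O₁ = π '' O₂ :=
      subset_antisymm (hsub O₂ O₁ a₂ a₁ ha₂ ha₁ hz₂ hz₁)
        (hsub O₁ O₂ a₁ a₂ ha₁ ha₂ hz₁ hz₂)
    have huniv : π '' O₁ = Set.univ := by
      have hun : π '' O₁ ∪ π '' O₂ = Set.univ := by
        rw [← Set.image_union, hcover, Set.image_univ]
        exact Set.range_eq_univ.mpr hsurj
      rw [← h12, Set.union_self] at hun
      exact hun
    exact ⟨hCount O₁ a₁ ha₁ huniv, hCount O₂ a₂ ha₂ (h12 ▸ huniv)⟩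
  · exfalso
    have hdisj' : ∀ x : ZMod n, π x ∈ π '' O₁ → x ∈ O₁ := by
      intro x hx
      have hx' : x ∈ O₁ ∪ O₂ := hcover ▸ Set.mem_univ x
      rcases hx' with hx' | hx'
      · exact hx'
      · exact (hcap ⟨π x, hx, Set.mem_image_of_mem π hx'⟩).elim
    have hπm : ∀ x : ZMod n, π (x + (m : ZMod n)) = π x := by
      intro x
      rw [map_add, map_natCast, ZMod.natCast_self, add_zero]
    have hu : ((m : ZMod n)) ∈ {u : ZMod n | (fun x => x + u) '' O₁ = O₁} := by
      show (fun x => x + (m : ZMod n)) '' O₁ = O₁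
      ext y
      constructor
      · rintro ⟨x, hx, rfl⟩
        exact hdisj' _ (by rw [hπm]; exact Set.mem_image_of_mem π hx)
      · intro hy
        refine ⟨y - (m : ZMod n), hdisj' _ ?_, by ring⟩
        have hyy : π (y - (m : ZMod n)) = π y := by
          have h := hπm (y - (m : ZMod n))
          rw [sub_add_cancel] at h
          exact h.symm
        rw [hyy]
        exact Set.mem_image_of_mem π hy
    rw [hrad] at hu
    have hm' : (m : ZMod n) = 0 := hu
    rw [ZMod.natCast_eq_zero_iff] at hm'
    exact absurd (Nat.le_of_dvd (Nat.pos_of_ne_zero hm0) hm') (not_le.mpr hmlt)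
end

section
/- Let Y ≤ ℤ/nℤ ⋊ ⟨α⟩ have exactly two orbits O_1, O_2 on ℤ/nℤ with rad(O_1) trivial. Then Y ∩ ℤ/nℤ (the translation part of Y) is trivial, and hence Y embeds into ⟨α⟩; in particular |Y| < n. -/
private lemma struct_lem {n : ℕ} (α : AddAut (ZMod n)) (y : Equiv.Perm (ZMod n))
    (hy : y ∈ Subgroup.closure
      ((Set.range fun a : ZMod n => Equiv.addLeft a) ∪ {α.toEquiv})) :
    ∃ β : AddAut (ZMod n), β ∈ AddSubgroup.zmultiples α ∧ ∀ x, y x = y 0 + β x := by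
  induction hy using Subgroup.closure_induction with
  | mem z hz =>
      rcases hz with ⟨a, rfl⟩ | hz
      · exact ⟨0, zero_mem _, fun x => by simp⟩
      · rcases Set.mem_singleton_iff.mp hz with rfl
        exact ⟨α, AddSubgroup.mem_zmultiples α, fun x => by simp⟩
  | one => exact ⟨0, zero_mem _, fun x => by simp⟩
  | mul y z _ _ ihy ihz =>
      obtain ⟨β, hβ, hy⟩ := ihy
      obtain ⟨γ, hγ, hz⟩ := ihz
      refine ⟨β + γ, add_mem hβ hγ, fun x => ?_⟩
      simp only [Equiv.Perm.mul_apply, AddAut.add_apply]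
      rw [hz x, hy (z 0 + γ x), hy (z 0), map_add]
      abel
  | inv y _ ih =>
      obtain ⟨β, hβ, hy⟩ := ih
      refine ⟨-β, neg_mem hβ, fun x => ?_⟩
      refine y.injective ?_
      rw [show y (y⁻¹ x) = x from y.apply_symm_apply x, hy (y⁻¹ 0 + (-β) x), map_add]
      have hbb : β ((-β) x) = x := AddAut.apply_neg_self _ β x
      have h0 : y 0 + β (y⁻¹ 0) = 0 := by
        rw [← hy (y⁻¹ 0)]; exact y.apply_symm_apply 0
      rw [hbb, ← add_assoc, h0, zero_add]

theorem stmt_10 (n : ℕ) [NeZero n] (α : AddAut (ZMod n))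
    (X : Subgroup (Equiv.Perm (ZMod n)))
    (hX : X = Subgroup.closure
      ((Set.range fun a : ZMod n => Equiv.addLeft a) ∪ {α.toEquiv}))
    (Y : Subgroup (Equiv.Perm (ZMod n))) (hYX : Y ≤ X)
    (O₁ O₂ : Set (ZMod n))
    (hO₁ : ∃ a, O₁ = MulAction.orbit Y a) (hO₂ : ∃ a, O₂ = MulAction.orbit Y a)
    (hcover : O₁ ∪ O₂ = Set.univ) (hdisj : Disjoint O₁ O₂)
    (hrad : {u : ZMod n | (fun x => x + u) '' O₁ = O₁} = {0}) :
    (∀ a : ZMod n, Equiv.addLeft a ∈ Y → a = 0) ∧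
      (∃ f : Y →* Subgroup.zpowers α.toEquiv, Function.Injective f) ∧
        Nat.card Y < n := by
  -- structure theorem for elements of Y
  have hdec : ∀ y : Y, ∃ β : AddAut (ZMod n), β ∈ AddSubgroup.zmultiples α ∧
      ∀ x, (y : Equiv.Perm (ZMod n)) x = (y : Equiv.Perm (ZMod n)) 0 + β x :=
    fun y => struct_lem α y (hX ▸ hYX y.2)
  -- Part 1
  have part1 : ∀ a : ZMod n, Equiv.addLeft a ∈ Y → a = 0 := by
    intro a ha
    obtain ⟨p, rfl⟩ := hO₁
    have hmem : a ∈ {u : ZMod n | (fun x => x + u) '' MulAction.orbit Y p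
        = MulAction.orbit Y p} := by
      show (fun x => x + a) '' MulAction.orbit Y p = MulAction.orbit Y p
      ext x
      simp only [Set.mem_image]
      constructor
      · rintro ⟨w, hw, rfl⟩
        obtain ⟨g, rfl⟩ := hw
        refine ⟨(⟨Equiv.addLeft a, ha⟩ : Y) * g, ?_⟩
        show ((⟨Equiv.addLeft a, ha⟩ : Y) * g) • p = g • p + a
        rw [mul_smul, Subgroup.smul_def, Subgroup.smul_def, Equiv.Perm.smul_def,
          Equiv.Perm.smul_def]
        simp [add_comm]
      · rintro ⟨g, rfl⟩
        refine ⟨((⟨Equiv.addLeft a, ha⟩ : Y)⁻¹ * g) • p, ⟨_, rfl⟩, ?_⟩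
        show (((⟨Equiv.addLeft a, ha⟩ : Y)⁻¹ * g) • p) + a = g • p
        rw [mul_smul, Subgroup.smul_def, Subgroup.smul_def, Equiv.Perm.smul_def,
          Equiv.Perm.smul_def]
        simp
    rw [hrad] at hmem
    exact hmem
  -- the value-at-one lemma for additive automorphisms
  have hβval : ∀ (β : AddAut (ZMod n)) (x : ZMod n), β x = x * β 1 := by
    intro β x
    have hx : ((x.val : ℕ) : ZMod n) = x := ZMod.natCast_rightInverse x
    calc β x = β ((x.val : ℕ) • (1 : ZMod n)) := by rw [nsmul_eq_mul, mul_one, hx]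
    _ = (x.val : ℕ) • β 1 := by rw [map_nsmul]
    _ = x * β 1 := by rw [nsmul_eq_mul, hx]
  -- the monoid hom into the powers of α
  have key : ∀ y : Y, (Equiv.addLeft ((y : Equiv.Perm (ZMod n)) 0))⁻¹
      * (y : Equiv.Perm (ZMod n)) ∈ Subgroup.zpowers α.toEquiv := by
    intro y
    obtain ⟨β, hβ, hy⟩ := hdec y
    obtain ⟨k, rfl⟩ := hβ
    have hk : (Equiv.addLeft ((y : Equiv.Perm (ZMod n)) 0))⁻¹
        * (y : Equiv.Perm (ZMod n)) = (k • α).toEquiv := by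
      ext x
      simp only [Equiv.neg_addLeft, Equiv.Perm.mul_apply, Equiv.coe_addLeft]
      show -((y : Equiv.Perm (ZMod n)) 0) + (y : Equiv.Perm (ZMod n)) x = (k • α) x
      rw [hy x, neg_add_cancel_left]
    rw [hk, show (k • α).toEquiv = α.toEquiv ^ k from
    (congrArg Additive.toMul (map_zsmul (AddAut.toPerm (ZMod n)) k α)).trans (toMul_zsmul _ _)]
    exact Subgroup.zpow_mem _ (Subgroup.mem_zpowers _) k
  set F : Y →* Subgroup.zpowers α.toEquiv :=
    { toFun := fun y => ⟨(Equiv.addLeft ((y : Equiv.Perm (ZMod n)) 0))⁻¹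
        * (y : Equiv.Perm (ZMod n)), key y⟩
      map_one' := by
        apply Subtype.ext
        show (Equiv.addLeft (((1 : Y) : Equiv.Perm (ZMod n)) 0))⁻¹
          * ((1 : Y) : Equiv.Perm (ZMod n)) = 1
        simp
      map_mul' := by
        intro y z
        apply Subtype.ext
        show (Equiv.addLeft (((y * z : Y) : Equiv.Perm (ZMod n)) 0))⁻¹
            * ((y * z : Y) : Equiv.Perm (ZMod n))
          = ((Equiv.addLeft ((y : Equiv.Perm (ZMod n)) 0))⁻¹ * (y : Equiv.Perm (ZMod n)))
            * ((Equiv.addLeft ((z : Equiv.Perm (ZMod n)) 0))⁻¹ * (z : Equiv.Perm (ZMod n)))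
        obtain ⟨β, hβ, hy⟩ := hdec y
        obtain ⟨γ, hγ, hz⟩ := hdec z
        ext x
        simp only [Subgroup.coe_mul, Equiv.neg_addLeft, Equiv.Perm.mul_apply,
          Equiv.coe_addLeft]
        rw [hz x, neg_add_cancel_left,
          hy ((z : Equiv.Perm (ZMod n)) 0 + γ x), hy ((z : Equiv.Perm (ZMod n)) 0),
          hy (γ x), map_add]
        abel
      }
  have hFinj : Function.Injective F := by
    rw [injective_iff_map_eq_one]
    intro y hy1
    have h1 : (Equiv.addLeft ((y : Equiv.Perm (ZMod n)) 0))⁻¹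
        * (y : Equiv.Perm (ZMod n)) = 1 := congrArg Subtype.val hy1
    have h2 : (y : Equiv.Perm (ZMod n))
        = Equiv.addLeft ((y : Equiv.Perm (ZMod n)) 0) :=
      (inv_mul_eq_one.mp h1).symm
    have h3 : ((y : Equiv.Perm (ZMod n)) 0) = 0 := part1 _ (h2 ▸ y.2)
    apply Subtype.ext
    rw [h2, h3, Equiv.addLeft_zero]
    rfl
  refine ⟨part1, ⟨F, hFinj⟩, ?_⟩
  -- nontriviality
  obtain ⟨p₁, hO₁'⟩ := hO₁
  obtain ⟨p₂, hO₂'⟩ := hO₂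
  have hp₁ : p₁ ∈ O₁ := hO₁' ▸ MulAction.mem_orbit_self p₁
  have hp₂ : p₂ ∈ O₂ := hO₂' ▸ MulAction.mem_orbit_self p₂
  haveI : Nontrivial (ZMod n) :=
    ⟨p₁, p₂, fun h => Set.disjoint_left.mp hdisj hp₁ (h ▸ hp₂)⟩
  -- the injection into nonzero elements
  have hG : ∀ y : Y, (y : Equiv.Perm (ZMod n)) 1 - (y : Equiv.Perm (ZMod n)) 0 ≠ 0 := by
    intro y h
    obtain ⟨β, hβ, hy⟩ := hdec y
    rw [hy 1, add_sub_cancel_left] at h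
    have hβ10 : β 1 = β 0 := by rw [map_zero β, h]
    exact one_ne_zero (β.injective hβ10)
  set G : Y → {x : ZMod n // x ≠ 0} :=
    fun y => ⟨(y : Equiv.Perm (ZMod n)) 1 - (y : Equiv.Perm (ZMod n)) 0, hG y⟩
  have hGinj : Function.Injective G := by
    intro y z hyz
    have h1 : (y : Equiv.Perm (ZMod n)) 1 - (y : Equiv.Perm (ZMod n)) 0
        = (z : Equiv.Perm (ZMod n)) 1 - (z : Equiv.Perm (ZMod n)) 0 :=
      congrArg Subtype.val hyz
    obtain ⟨β, hβ, hy⟩ := hdec y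
    obtain ⟨γ, hγ, hz⟩ := hdec z
    rw [hy 1, hz 1, add_sub_cancel_left, add_sub_cancel_left] at h1
    have hβγ : ∀ x, β x = γ x := fun x => by rw [hβval β x, hβval γ x, h1]
    apply hFinj
    apply Subtype.ext
    show (Equiv.addLeft ((y : Equiv.Perm (ZMod n)) 0))⁻¹ * (y : Equiv.Perm (ZMod n))
      = (Equiv.addLeft ((z : Equiv.Perm (ZMod n)) 0))⁻¹ * (z : Equiv.Perm (ZMod n))
    ext x
    simp only [Equiv.neg_addLeft, Equiv.Perm.mul_apply, Equiv.coe_addLeft]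
    rw [hy x, hz x, hβγ x, neg_add_cancel_left, neg_add_cancel_left]
  calc Nat.card Y ≤ Nat.card {x : ZMod n // x ≠ 0} :=
        Nat.card_le_card_of_injective G hGinj
    _ < n := by
        rw [Nat.card_eq_fintype_card]
        have hlt := Fintype.card_subtype_lt (p := fun x : ZMod n => x ≠ 0)
          (x := (0 : ZMod n)) (by simp)
        rwa [ZMod.card] at hlt
end

section
/- Let Y ≤ ℤ/nℤ ⋊ ⟨α⟩ have exactly two orbits O_1, O_2 on ℤ/nℤ with |O_1| ≤ |O_2| and rad(O_1) trivial, where n = p^t is a prime power. Then |O_1| = p^{t−1} and |O_2| = p^{t−1}(p−1). -/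
open Pointwise

lemma nt_aux {p t m₁ m₂ : ℕ} (hp : p.Prime) (ht : 1 ≤ t)
    (h1 : m₁ ∣ p ^ (t - 1) * (p - 1)) (h2 : m₂ ∣ p ^ (t - 1) * (p - 1))
    (hs : m₁ + m₂ = p ^ t) (hle : m₁ ≤ m₂) (h1p : 0 < m₁) (h2p : 0 < m₂) :
    m₁ = p ^ (t - 1) ∧ m₂ = p ^ (t - 1) * (p - 1) := by
  have hp2 := hp.two_le
  have hcop : Nat.Coprime p (p - 1) :=
    hp.coprime_iff_not_dvd.mpr (fun h => by
      have := Nat.le_of_dvd (by omega) h; omega)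
  have hbound : ∀ m : ℕ, 0 < m → m ∣ p ^ (t - 1) * (p - 1) → m.factorization p ≤ t - 1 := by
    intro m hm hdvd
    have hd1 : p ^ (m.factorization p) ∣ p ^ (t - 1) * (p - 1) :=
      (Nat.ordProj_dvd m p).trans hdvd
    have hd3 : p ^ (m.factorization p) ∣ p ^ (t - 1) :=
      (Nat.Coprime.dvd_of_dvd_mul_right (hcop.pow_left _) hd1)
    exact (Nat.pow_dvd_pow_iff_le_right hp.one_lt).mp hd3
  have ha1 := hbound m₁ h1p h1
  have ha2 := hbound m₂ h2p h2
  have key : ∀ m m' : ℕ, 0 < m → 0 < m' → m + m' = p ^ t →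
      m.factorization p ≤ t - 1 → m.factorization p < m'.factorization p → False := by
    intro m m' hm hm' hsum hle' hlt
    have hd1 : p ^ (m.factorization p + 1) ∣ m' :=
      (Nat.Prime.pow_dvd_iff_le_factorization hp hm'.ne').mpr hlt
    have hd2 : p ^ (m.factorization p + 1) ∣ p ^ t := pow_dvd_pow p (by omega)
    have hd3 : p ^ (m.factorization p + 1) ∣ m := by
      have hsub : p ^ (m.factorization p + 1) ∣ p ^ t - m' := Nat.dvd_sub hd2 hd1
      have hme : p ^ t - m' = m := by omega
      rwa [hme] at hsub
    have := (Nat.Prime.pow_dvd_iff_le_factorization hp hm.ne').mp hd3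
    omega
  have haeq : m₁.factorization p = m₂.factorization p := by
    rcases lt_trichotomy (m₁.factorization p) (m₂.factorization p) with h | h | h
    · exact (key m₁ m₂ h1p h2p hs ha1 h).elim
    · exact h
    · exact (key m₂ m₁ h2p h1p (by omega) ha2 h).elim
  set a := m₁.factorization p with hadef
  set d₁ := m₁ / p ^ a with hd1def
  set d₂ := m₂ / p ^ (m₂.factorization p) with hd2def
  have hm1 : m₁ = p ^ a * d₁ := (Nat.ordProj_mul_ordCompl_eq_self m₁ p).symm
  have hm2 : m₂ = p ^ a * d₂ := by
    rw [haeq]; exact (Nat.ordProj_mul_ordCompl_eq_self m₂ p).symm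
  have hnd1 : ¬ p ∣ d₁ := Nat.not_dvd_ordCompl hp h1p.ne'
  have hnd2 : ¬ p ∣ d₂ := Nat.not_dvd_ordCompl hp h2p.ne'
  have hddvd : ∀ d m : ℕ, ¬ p ∣ d → d ∣ m → m ∣ p ^ (t - 1) * (p - 1) → d ∣ p - 1 := by
    intro d m hnd hdm hmd
    have hcd : Nat.Coprime d (p ^ (t - 1)) :=
      (Nat.coprime_comm.mp ((hp.coprime_iff_not_dvd).mpr hnd)).pow_right _
    exact Nat.Coprime.dvd_of_dvd_mul_left hcd (hdm.trans hmd)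
  have hd1dvd : d₁ ∣ p - 1 := hddvd d₁ m₁ hnd1 (Nat.ordCompl_dvd m₁ p) h1
  have hd2dvd : d₂ ∣ p - 1 := hddvd d₂ m₂ hnd2 ⟨p ^ a, by rw [hm2]; ring⟩ h2
  have hd1pos : 0 < d₁ := Nat.ordCompl_pos p h1p.ne'
  have hd2pos : 0 < d₂ := Nat.ordCompl_pos p h2p.ne'
  have hat : a ≤ t - 1 := ha1
  have hsum2 : p ^ a * (d₁ + d₂) = p ^ t := by rw [Nat.mul_add, ← hm1, ← hm2, hs]
  have hta : a < t := by omega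
  have hsplit : p ^ t = p ^ a * p ^ (t - a) := by
    rw [← pow_add]; congr 1; omega
  have hdd : d₁ + d₂ = p ^ (t - a) := by
    rw [hsplit] at hsum2
    exact Nat.eq_of_mul_eq_mul_left (pow_pos hp.pos a) hsum2
  have hd1le : d₁ ≤ p - 1 := Nat.le_of_dvd (by omega) hd1dvd
  have hd2le : d₂ ≤ p - 1 := Nat.le_of_dvd (by omega) hd2dvd
  have hta1 : t - a = 1 := by
    by_contra h
    have h2a : 2 ≤ t - a := by omega
    have : p ^ 2 ≤ p ^ (t - a) := Nat.pow_le_pow_right hp.pos h2a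
    have hpp : p ^ 2 = p * p := sq p
    have h2p' : 2 * p ≤ p * p := Nat.mul_le_mul_right p hp2
    omega
  have hdp : d₁ + d₂ = p := by rw [hdd, hta1, pow_one]
  have hd12 : d₁ ≤ d₂ := by
    rw [hm1, hm2] at hle
    exact Nat.le_of_mul_le_mul_left hle (pow_pos hp.pos a)
  have hdvd21 : d₂ ∣ d₁ - 1 := by
    have he : d₁ - 1 = p - 1 - d₂ := by omega
    rw [he]
    exact Nat.dvd_sub hd2dvd dvd_rfl
  have hd1one : d₁ = 1 := by
    by_contra h
    have : 0 < d₁ - 1 := by omega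
    have := Nat.le_of_dvd this hdvd21
    omega
  have haeq' : a = t - 1 := by
    have : d₂ = p - 1 := by omega
    -- m₂ = p^a * (p-1) divides p^(t-1)*(p-1)... instead: from hdd etc a = t-1 direct:
    omega
  constructor
  · rw [hm1, hd1one, mul_one, haeq']
  · rw [hm2, haeq']; congr 1; omega

section Grp
variable (n : ℕ) [NeZero n]

lemma affine_addAut (β : AddAut (ZMod n)) (x : ZMod n) : β x = x * β 1 := by
  obtain ⟨k, rfl⟩ := ZMod.intCast_surjective x
  have h : (k : ZMod n) = k • (1 : ZMod n) := by simp
  rw [h, map_zsmul]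
  simp [zsmul_eq_mul]

lemma unit_addAut (β : AddAut (ZMod n)) : IsUnit (β 1) := by
  refine IsUnit.of_mul_eq_one (β.symm 1) ?_
  have h1 : β (β.symm 1) = (β.symm 1) * β 1 := affine_addAut n β _
  have h2 : β (β.symm 1) = 1 := by
    show β (β.symm 1) = 1
    exact β.apply_symm_apply 1
  rw [h2] at h1
  rw [mul_comm]; exact h1.symm

/-- The subgroup of affine permutations of `ZMod n`. -/
def affSub : Subgroup (Equiv.Perm (ZMod n)) where
  carrier := {g | ∃ u b : ZMod n, IsUnit u ∧ ∀ x, g x = u * x + b}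
  one_mem' := ⟨1, 0, isUnit_one, fun x => by simp⟩
  mul_mem' := by
    rintro g h ⟨u, b, hu, hg⟩ ⟨v, d, hv, hh⟩
    refine ⟨u * v, u * d + b, hu.mul hv, fun x => ?_⟩
    rw [Equiv.Perm.mul_apply, hh, hg]; ring
  inv_mem' := by
    rintro g ⟨u, b, hu, hg⟩
    obtain ⟨w, hw⟩ : ∃ w, u * w = 1 := ⟨↑hu.unit⁻¹, by
      rw [IsUnit.mul_val_inv]⟩
    refine ⟨w, -(w * b), IsUnit.of_mul_eq_one u (by rw [mul_comm]; exact hw), fun x => ?_⟩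
    show g.symm x = w * x + -(w * b)
    rw [Equiv.symm_apply_eq, hg]
    linear_combination (b - x) * hw

end Grp

theorem stmt_11 (n p t : ℕ) (hp : p.Prime) (hn : n = p ^ t) [NeZero n]
    (α : AddAut (ZMod n))
    (X : Subgroup (Equiv.Perm (ZMod n)))
    (hX : X = Subgroup.closure
      ((Set.range fun a : ZMod n => Equiv.addLeft a) ∪ {α.toEquiv}))
    (Y : Subgroup (Equiv.Perm (ZMod n))) (hYX : Y ≤ X)
    (O₁ O₂ : Set (ZMod n))
    (hO₁ : ∃ a, O₁ = MulAction.orbit Y a) (hO₂ : ∃ a, O₂ = MulAction.orbit Y a)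
    (hcover : O₁ ∪ O₂ = Set.univ) (hdisj : Disjoint O₁ O₂)
    (hsize : O₁.ncard ≤ O₂.ncard)
    (hrad : {u : ZMod n | (fun x => x + u) '' O₁ = O₁} = {0}) :
    O₁.ncard = p ^ (t - 1) ∧ O₂.ncard = p ^ (t - 1) * (p - 1) := by
  classical
  -- X is contained in the affine subgroup
  have hXS : X ≤ affSub n := by
    rw [hX, Subgroup.closure_le]
    rintro g (⟨a, rfl⟩ | rfl)
    · exact ⟨1, a, isUnit_one, fun x => by simp [add_comm]⟩
    · exact ⟨α 1, 0, unit_addAut n α, fun x => by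
        simpa [mul_comm] using affine_addAut n α x⟩
  have hYS : Y ≤ affSub n := hYX.trans hXS
  -- the multiplier homomorphism
  let Φ : Y →* ZMod n :=
    { toFun := fun y => (y : Equiv.Perm (ZMod n)) 1 - (y : Equiv.Perm (ZMod n)) 0
      map_one' := by simp
      map_mul' := by
        rintro y z
        obtain ⟨u, b, hu, hy⟩ := hYS y.2
        obtain ⟨v, d, hv, hz⟩ := hYS z.2
        have hyz : ∀ x : ZMod n, ((y * z : Y) : Equiv.Perm (ZMod n)) x = u * (v * x + d) + b := by
          intro x
          rw [Subgroup.coe_mul, Equiv.Perm.mul_apply, hz, hy]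
        simp only [hyz, hy, hz]
        ring }
  have hΦinj : Function.Injective Φ.toHomUnits := by
    rw [injective_iff_map_eq_one]
    intro y hy1
    have h1 : (y : Equiv.Perm (ZMod n)) 1 - (y : Equiv.Perm (ZMod n)) 0 = 1 := by
      have h := congrArg (Units.val) hy1
      exact (by simpa using h : Φ y = 1)
    obtain ⟨u, b, hu, hyb⟩ := hYS y.2
    have hu1 : u = 1 := by
      have h0 := hyb 0
      have hone := hyb 1
      rw [h0, hone] at h1
      ring_nf at h1
      exact h1
    subst hu1
    -- y is translation by b
    have hb : ∀ x : ZMod n, (y : Equiv.Perm (ZMod n)) x = x + b := by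
      intro x; rw [hyb x, one_mul]
    obtain ⟨a, hOa⟩ := hO₁
    have him : y • O₁ = O₁ := by rw [hOa]; exact MulAction.smul_orbit y a
    have hbmem : b ∈ {u : ZMod n | (fun x => x + u) '' O₁ = O₁} := by
      show (fun x => x + b) '' O₁ = O₁
      have hfun : (fun x : ZMod n => x + b) = fun x : ZMod n => y • x := by
        funext x
        show x + b = (y : Equiv.Perm (ZMod n)) x
        rw [hb x]
      rw [hfun, Set.image_smul]
      exact him
    rw [hrad] at hbmem
    have hb0 : b = 0 := hbmem
    ext x
    show (y : Equiv.Perm (ZMod n)) x = x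
    rw [hb x, hb0, add_zero]
  -- cardinalities
  have hYcard : Nat.card Y ∣ n.totient := by
    have e : Nat.card Y = Nat.card Φ.toHomUnits.range :=
      Nat.card_congr (MonoidHom.ofInjective hΦinj).toEquiv
    rw [e]
    have h := Subgroup.card_subgroup_dvd_card Φ.toHomUnits.range
    rwa [Nat.card_eq_fintype_card (α := (ZMod n)ˣ), ZMod.card_units_eq_totient] at h
  have horb : ∀ O : Set (ZMod n), (∃ a, O = MulAction.orbit Y a) → O.ncard ∣ Nat.card Y := by
    rintro O ⟨a, rfl⟩
    rw [← Nat.card_coe_set_eq,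
      Nat.card_congr (MulAction.orbitEquivQuotientStabilizer Y a)]
    exact Subgroup.card_quotient_dvd_card _
  have hpos : ∀ O : Set (ZMod n), (∃ a, O = MulAction.orbit Y a) → 0 < O.ncard := by
    rintro O ⟨a, rfl⟩
    rw [Set.ncard_pos (Set.toFinite _)]
    exact ⟨a, MulAction.mem_orbit_self a⟩
  have hsum : O₁.ncard + O₂.ncard = p ^ t := by
    rw [← Set.ncard_union_eq hdisj (Set.toFinite _) (Set.toFinite _), hcover, Set.ncard_univ,
      Nat.card_zmod, hn]
  have ht : 1 ≤ t := by
    by_contra h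
    have ht0 : t = 0 := by omega
    have h1 := hpos O₁ hO₁
    have h2 := hpos O₂ hO₂
    rw [ht0, pow_zero] at hsum
    omega
  have htot : n.totient = p ^ (t - 1) * (p - 1) := by
    rw [hn, Nat.totient_prime_pow hp ht]
  rw [htot] at hYcard
  exact nt_aux hp ht ((horb O₁ hO₁).trans hYcard) ((horb O₂ hO₂).trans hYcard)
    hsum hsize (hpos O₁ hO₁) (hpos O₂ hO₂)
end

section
/- Let Y ≤ ℤ/nℤ ⋊ ⟨α⟩ have exactly two orbits O_1, O_2 on ℤ/nℤ with trivial radical and n = 2^t. Then t ≤ 2; if t = 2 then |O_1| = |O_2| = 2, α acts as x ↦ −x on ℤ/4ℤ, and {O_1, O_2} = {{0, i}, {2, −i}} for some i ∈ {1, 3}. -/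
lemma addhom_form {n : ℕ} [NeZero n] (f : AddAut (ZMod n)) (x : ZMod n) :
    f x = f 1 * x := by
  have h1 : x = (x.val : ℕ) • (1 : ZMod n) := by
    simp [nsmul_eq_mul, ZMod.natCast_rightInverse x]
  calc f x = f ((x.val : ℕ) • (1 : ZMod n)) := by rw [← h1]
    _ = (x.val : ℕ) • f 1 := by rw [map_nsmul]
    _ = f 1 * x := by
        rw [nsmul_eq_mul, mul_comm]; congr 1; exact ZMod.natCast_rightInverse x

lemma alpha_unit {n : ℕ} [NeZero n] (f : AddAut (ZMod n)) : IsUnit (f 1 : ZMod n) := by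
  apply IsUnit.of_mul_eq_one (f.symm 1)
  rw [← addhom_form f (f.symm 1)]
  simp

-- affine form of elements of X
lemma affine_form {n : ℕ} [NeZero n] (α : AddAut (ZMod n))
    (X : Subgroup (Equiv.Perm (ZMod n)))
    (hX : X = Subgroup.closure
      ((Set.range fun a : ZMod n => Equiv.addLeft a) ∪ {α.toEquiv})) :
    ∀ y ∈ X, ∃ u c : ZMod n, IsUnit u ∧ ∀ x, y x = u * x + c := by
  intro y hy
  rw [hX] at hy
  induction hy using Subgroup.closure_induction'' with
  | mem y h =>
    rcases h with h | h
    · rcases h with ⟨a, rfl⟩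
      exact ⟨1, a, isUnit_one, fun x => by simp [add_comm]⟩
    · rcases h with rfl
      exact ⟨α 1, 0, alpha_unit α, fun x => by simpa using addhom_form α x⟩
  | inv_mem y h =>
    rcases h with h | h
    · rcases h with ⟨a, rfl⟩
      exact ⟨1, -a, isUnit_one, fun x => by simp [add_comm, sub_eq_add_neg]⟩
    · rcases h with rfl
      refine ⟨α.symm 1, 0, alpha_unit α.symm, fun x => by simpa using addhom_form α.symm x⟩
  | one => exact ⟨1, 0, isUnit_one, fun x => by simp⟩
  | mul y z _ _ hy hz =>
    rcases hy with ⟨u, c, hu, hyf⟩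
    rcases hz with ⟨v, d, hv, hzf⟩
    refine ⟨u * v, u * d + c, hu.mul hv, fun x => ?_⟩
    simp only [Equiv.Perm.mul_apply, hzf, hyf]
    ring

lemma normal_form {n : ℕ} [NeZero n] {α : AddAut (ZMod n)}
    {X : Subgroup (Equiv.Perm (ZMod n))}
    (hX : X = Subgroup.closure
      ((Set.range fun a : ZMod n => Equiv.addLeft a) ∪ {α.toEquiv}))
    {y : Equiv.Perm (ZMod n)} (hy : y ∈ X) :
    IsUnit (y 1 - y 0) ∧ ∀ x, y x = (y 1 - y 0) * x + y 0 := by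
  obtain ⟨u, c, hu, hf⟩ := affine_form α X hX y hy
  have h0 : y 0 = c := by simp [hf]
  have h1 : y 1 - y 0 = u := by simp [hf, h0]
  rw [h1, h0]
  exact ⟨hu, hf⟩

-- odd unit times 2^(t-1)
lemma unit_mul_h {t : ℕ} (ht : 1 ≤ t) [NeZero (2^t)] {u : ZMod (2^t)} (hu : IsUnit u) :
    u * ((2^(t-1) : ℕ) : ZMod (2^t)) = ((2^(t-1) : ℕ) : ZMod (2^t)) := by
  obtain ⟨w, rfl⟩ := hu
  have hco : Nat.Coprime ((w : ZMod (2^t)).val) (2^t) := ZMod.val_coe_unit_coprime w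
  have hodd : (w : ZMod (2^t)).val % 2 = 1 := by
    rcases Nat.even_or_odd ((w : ZMod (2^t)).val) with he | ho
    · exfalso
      have h2 : (2 : ℕ) ∣ (w : ZMod (2^t)).val := he.two_dvd
      have h2' : (2 : ℕ) ∣ 2^t := dvd_pow_self 2 (by omega)
      have hg : (2:ℕ) ∣ Nat.gcd ((w : ZMod (2^t)).val) (2^t) := Nat.dvd_gcd h2 h2'
      rw [hco] at hg
      omega
    · obtain ⟨k, hk⟩ := ho; omega
  obtain ⟨m, hm⟩ : ∃ m, (w : ZMod (2^t)).val = 2*m+1 := ⟨(w : ZMod (2^t)).val / 2, by omega⟩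
  have hw : (w : ZMod (2^t)) = (((w : ZMod (2^t)).val : ℕ) : ZMod (2^t)) :=
    (ZMod.natCast_rightInverse _).symm
  rw [hw, hm]
  have hzero : ((2^t : ℕ) : ZMod (2^t)) = 0 := by
    exact_mod_cast ZMod.natCast_self (2^t)
  have h2t : (2:ZMod (2^t)) * (2:ZMod (2^t))^(t-1) = 0 := by
    have he : (2:ZMod (2^t)) * 2^(t-1) = ((2^t : ℕ) : ZMod (2^t)) := by
      push_cast
      rw [← pow_succ']
      congr 1
      omega
    rw [he, hzero]
  push_cast
  linear_combination (m : ZMod (2^t)) * h2t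

section hfacts
variable {t : ℕ}

lemma pow_cast_zero : ((2^t : ℕ) : ZMod (2^t)) = 0 := by
  exact_mod_cast ZMod.natCast_self (2^t)

lemma h_ne_zero [NeZero (2^t)] (ht : 1 ≤ t) : ((2^(t-1) : ℕ) : ZMod (2^t)) ≠ 0 := by
  rw [Ne, ZMod.natCast_eq_zero_iff]
  intro hdvd
  have h1 : (2:ℕ)^t ≤ 2^(t-1) := Nat.le_of_dvd (Nat.pow_pos (by omega)) hdvd
  have h2 : (2:ℕ)^(t-1) < 2^t := Nat.pow_lt_pow_right (by omega) (by omega)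
  omega

lemma h_add_h (ht : 1 ≤ t) :
    ((2^(t-1) : ℕ) : ZMod (2^t)) + ((2^(t-1) : ℕ) : ZMod (2^t)) = 0 := by
  have : ((2^(t-1) : ℕ) : ZMod (2^t)) + ((2^(t-1) : ℕ) : ZMod (2^t))
      = ((2^(t-1) + 2^(t-1) : ℕ) : ZMod (2^t)) := by push_cast; ring
  rw [this]
  have he : (2:ℕ)^(t-1) + 2^(t-1) = 2^t := by
    have : (2:ℕ)^t = 2^(t-1) * 2 := by rw [← pow_succ]; congr 1; omega
    omega
  rw [he, pow_cast_zero]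

lemma h_sq (ht : 2 ≤ t) :
    ((2^(t-1) : ℕ) : ZMod (2^t)) * ((2^(t-1) : ℕ) : ZMod (2^t)) = 0 := by
  have : ((2^(t-1) : ℕ) : ZMod (2^t)) * ((2^(t-1) : ℕ) : ZMod (2^t))
      = ((2^(t-1) * 2^(t-1) : ℕ) : ZMod (2^t)) := by push_cast; ring
  rw [this, ZMod.natCast_eq_zero_iff]
  rw [← pow_add]
  exact pow_dvd_pow 2 (by omega)

lemma u0_unit (ht : 2 ≤ t) : IsUnit (1 + ((2^(t-1) : ℕ) : ZMod (2^t))) := by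
  apply IsUnit.of_mul_eq_one (1 + ((2^(t-1) : ℕ) : ZMod (2^t)))
  have h1 := h_add_h (t := t) (by omega)
  have h2 := h_sq (t := t) ht
  linear_combination h1 + h2

lemma two_c [NeZero (2^t)] (ht : 1 ≤ t) {c : ZMod (2^t)} (hc : c + c = 0) :
    c = 0 ∨ c = ((2^(t-1) : ℕ) : ZMod (2^t)) := by
  have hv : ((c.val + c.val : ℕ) : ZMod (2^t)) = 0 := by
    push_cast
    rw [ZMod.natCast_rightInverse c]
    exact hc
  rw [ZMod.natCast_eq_zero_iff] at hv
  have hlt : c.val < 2^t := ZMod.val_lt c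
  have he : (2:ℕ)^t = 2^(t-1) * 2 := by rw [← pow_succ]; congr 1; omega
  have : c.val = 0 ∨ c.val = 2^(t-1) := by
    rcases hv with ⟨k, hk⟩
    have hk2 : k < 2 := by
      by_contra hge
      push_neg at hge
      have : 2^t * 2 ≤ 2^t * k := Nat.mul_le_mul_left _ hge
      omega
    interval_cases k <;> omega
  rcases this with h | h
  · left; rw [← ZMod.natCast_rightInverse c, h]; simp
  · right; rw [← ZMod.natCast_rightInverse c, h]

lemma w_unit [NeZero (2^t)] (ht : 3 ≤ t) : IsUnit (((1 + 2^(t-2) : ℕ)) : ZMod (2^t)) := by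
  rw [ZMod.isUnit_iff_coprime]
  apply Nat.Coprime.pow_right
  rw [Nat.coprime_comm, Nat.Prime.coprime_iff_not_dvd Nat.prime_two]
  have : (2:ℕ)^(t-2) = 2^(t-3)*2 := by rw [← pow_succ]; congr 1; omega
  omega

section orbits
variable {M : Type*} (Y : Subgroup (Equiv.Perm M))

lemma orbit_inv {y : Equiv.Perm M} (hy : y ∈ Y) {a x : M}
    (hx : x ∈ MulAction.orbit Y a) : y x ∈ MulAction.orbit Y a := by
  obtain ⟨g, hg⟩ := hx
  refine ⟨⟨y, hy⟩ * g, ?_⟩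
  show (⟨y, hy⟩ * g : ↥Y) • a = y x
  rw [mul_smul]
  rw [show (g : ↥Y) • a = x from hg]
  rfl

lemma orbit_image {y : Equiv.Perm M} (hy : y ∈ Y) (a : M) :
    y '' (MulAction.orbit Y a) = MulAction.orbit Y a := by
  apply Set.Subset.antisymm
  · rintro x ⟨z, hz, rfl⟩
    exact orbit_inv Y hy hz
  · intro x hx
    refine ⟨y⁻¹ x, orbit_inv Y (inv_mem hy) hx, ?_⟩
    simp

end orbits

section master
variable {t : ℕ} [NeZero (2^t)] {α : AddAut (ZMod (2^t))}
  {X Y : Subgroup (Equiv.Perm (ZMod (2^t)))}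
  {P R : Set (ZMod (2^t))}

-- Step B : pure translations in Y are trivial
omit [NeZero (2^t)] in
lemma transl_triv (hP : P = MulAction.orbit Y (0 : ZMod (2^t)))
    (hrad : ∀ u, (fun x => x + u) '' P = P → u = 0)
    {y : Equiv.Perm (ZMod (2^t))} (hy : y ∈ Y) {c : ZMod (2^t)}
    (hc : ∀ x, y x = x + c) : c = 0 := by
  apply hrad
  have : (fun x => x + c) '' P = y '' P := Set.image_congr (fun x _ => (hc x).symm)
  rw [this, hP, orbit_image Y hy]

-- same multiplier ⇒ equal
lemma mult_inj (hX : X = Subgroup.closure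
      ((Set.range fun a : ZMod (2^t) => Equiv.addLeft a) ∪ {α.toEquiv}))
    (hYX : Y ≤ X)
    (hP : P = MulAction.orbit Y (0 : ZMod (2^t)))
    (hrad : ∀ u, (fun x => x + u) '' P = P → u = 0)
    {z w : Equiv.Perm (ZMod (2^t))} (hz : z ∈ Y) (hw : w ∈ Y)
    (he : z 1 - z 0 = w 1 - w 0) : z = w := by
  obtain ⟨hu, hzf⟩ := normal_form hX (hYX hz)
  obtain ⟨_, hwf⟩ := normal_form hX (hYX hw)
  rw [← he] at hwf
  have hv : (w * z⁻¹ : Equiv.Perm (ZMod (2^t))) ∈ Y := mul_mem hw (inv_mem hz)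
  have hvt : ∀ x, (w * z⁻¹) x = x + (w 0 - z 0) := by
    intro x
    have h1 : z (z⁻¹ x) = x := by simp
    rw [hzf (z⁻¹ x)] at h1
    simp only [Equiv.Perm.mul_apply]
    rw [hwf (z⁻¹ x)]
    rw [show (z 1 - z 0) * (z⁻¹ x) = x - z 0 by linear_combination h1]
    ring
  have h0 : w 0 - z 0 = 0 := transl_triv hP hrad hv hvt
  have hc : w 0 = z 0 := by linear_combination h0
  apply Equiv.ext
  intro x
  rw [hzf x, hwf x, hc]

end master

section master2
variable {t : ℕ} [NeZero (2^t)] {α : AddAut (ZMod (2^t))}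
  {X Y : Subgroup (Equiv.Perm (ZMod (2^t)))}
  {P R : Set (ZMod (2^t))}

lemma comm_h (hX : X = Subgroup.closure
      ((Set.range fun a : ZMod (2^t) => Equiv.addLeft a) ∪ {α.toEquiv}))
    (hYX : Y ≤ X) (ht : 1 ≤ t)
    {y : Equiv.Perm (ZMod (2^t))} (hy : y ∈ Y) (x : ZMod (2^t)) :
    y (x + ((2^(t-1) : ℕ) : ZMod (2^t))) = y x + ((2^(t-1) : ℕ) : ZMod (2^t)) := by
  obtain ⟨hu, hf⟩ := normal_form hX (hYX hy)
  rw [hf, hf x, mul_add, unit_mul_h ht hu]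
  ring

lemma R_struct (hX : X = Subgroup.closure
      ((Set.range fun a : ZMod (2^t) => Equiv.addLeft a) ∪ {α.toEquiv}))
    (hYX : Y ≤ X) (ht : 1 ≤ t)
    (hP : P = MulAction.orbit Y (0 : ZMod (2^t)))
    (hR : ∃ a, R = MulAction.orbit Y a)
    (hcover : P ∪ R = Set.univ) (hdisj : Disjoint P R)
    (hrad : ∀ u, (fun x => x + u) '' P = P → u = 0) :
    R = (fun x => x + ((2^(t-1) : ℕ) : ZMod (2^t))) '' P := by
  set h : ZMod (2^t) := ((2^(t-1) : ℕ) : ZMod (2^t)) with hh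
  have himg : (fun x => x + h) '' P = MulAction.orbit Y h := by
    apply Set.Subset.antisymm
    · rintro q ⟨x, hx, rfl⟩
      rw [hP] at hx
      obtain ⟨g, hg⟩ := hx
      refine ⟨g, ?_⟩
      show (g : Equiv.Perm (ZMod (2^t))) h = x + h
      have : (g : Equiv.Perm (ZMod (2^t))) (0 + h) = (g : Equiv.Perm (ZMod (2^t))) 0 + h :=
        comm_h hX hYX ht g.2 0
      rw [zero_add] at this
      rw [this, show (g : Equiv.Perm (ZMod (2^t))) 0 = x from hg]
    · rintro q ⟨g, hg⟩
      have : (g : Equiv.Perm (ZMod (2^t))) (0 + h) = (g : Equiv.Perm (ZMod (2^t))) 0 + h :=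
        comm_h hX hYX ht g.2 0
      rw [zero_add] at this
      refine ⟨(g : Equiv.Perm (ZMod (2^t))) 0, by rw [hP]; exact ⟨g, rfl⟩, ?_⟩
      show (g : Equiv.Perm (ZMod (2^t))) 0 + h = q
      rw [← this]
      exact hg
  have hmem : h ∈ P ∪ R := by rw [hcover]; trivial
  rcases hmem with hmP | hmR
  · exfalso
    apply h_ne_zero (t := t) ht
    apply hrad
    rw [himg, hP]
    apply MulAction.orbit_eq_iff.mpr
    rw [hP] at hmP
    exact hmP
  · obtain ⟨a, ha⟩ := hR
    rw [himg, ha]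
    apply MulAction.orbit_eq_iff.mpr
    rw [ha] at hmR
    obtain ⟨g, hg⟩ := hmR
    refine ⟨g⁻¹, ?_⟩
    show g⁻¹ • h = a
    rw [inv_smul_eq_iff]
    exact (show (g : ↥Y) • a = h from hg).symm

lemma card_P (ht : 1 ≤ t)
    (hcover : P ∪ R = Set.univ) (hdisj : Disjoint P R)
    (hRP : R = (fun x => x + ((2^(t-1) : ℕ) : ZMod (2^t))) '' P) :
    P.ncard = 2^(t-1) := by
  have hcard : P.ncard + R.ncard = 2^t := by
    rw [← Set.ncard_union_eq hdisj (Set.toFinite P) (Set.toFinite R), hcover,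
      Set.ncard_univ, Nat.card_zmod]
  have hinj : Function.Injective (fun x : ZMod (2^t) => x + ((2^(t-1) : ℕ) : ZMod (2^t))) :=
    fun a b hab => by simpa using hab
  have hPR : R.ncard = P.ncard := by rw [hRP, Set.ncard_image_of_injective _ hinj]
  have he : (2:ℕ)^t = 2^(t-1) + 2^(t-1) := by
    have : (2:ℕ)^t = 2^(t-1)*2 := by rw [← pow_succ]; congr 1; omega
    omega
  omega

end master2

section master3
variable {t : ℕ} [NeZero (2^t)] {α : AddAut (ZMod (2^t))}
  {X Y : Subgroup (Equiv.Perm (ZMod (2^t)))}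
  {P R : Set (ZMod (2^t))}

lemma mult_surj (hX : X = Subgroup.closure
      ((Set.range fun a : ZMod (2^t) => Equiv.addLeft a) ∪ {α.toEquiv}))
    (hYX : Y ≤ X) (ht : 1 ≤ t)
    (hP : P = MulAction.orbit Y (0 : ZMod (2^t)))
    (hcardP : P.ncard = 2^(t-1))
    (hrad : ∀ u, (fun x => x + u) '' P = P → u = 0) :
    ∀ u : ZMod (2^t), IsUnit u → ∃ y ∈ Y, ∀ x, y x = u * x + y 0 := by
  have hcu : Nat.card (ZMod (2^t))ˣ = 2^(t-1) := by
    rw [Nat.card_eq_fintype_card, ZMod.card_units_eq_totient,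
      Nat.totient_prime_pow Nat.prime_two (by omega)]
    simp
  -- surjection Y → P
  have hsurj : Function.Surjective (fun g : Y => (⟨g • (0 : ZMod (2^t)),
      by rw [hP]; exact MulAction.mem_orbit _ _⟩ : P)) := by
    rintro ⟨x, hx⟩
    rw [hP] at hx
    obtain ⟨g, hg⟩ := hx
    exact ⟨g, Subtype.ext hg⟩
  have hYge : 2^(t-1) ≤ Nat.card Y := by
    calc 2^(t-1) = P.ncard := hcardP.symm
    _ = Nat.card P := (Nat.card_coe_set_eq P).symm
    _ ≤ Nat.card Y := Nat.card_le_card_of_surjective _ hsurj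
  -- injection Y → units
  let ν : Y → (ZMod (2^t))ˣ := fun y => (normal_form hX (hYX y.2)).1.unit
  have hν : ∀ y : Y, (ν y : ZMod (2^t)) = (y : Equiv.Perm (ZMod (2^t))) 1
      - (y : Equiv.Perm (ZMod (2^t))) 0 := fun y => IsUnit.unit_spec _
  have hinj : Function.Injective ν := by
    intro z w hzw
    have : (z : Equiv.Perm (ZMod (2^t))) 1 - (z : Equiv.Perm (ZMod (2^t))) 0
        = (w : Equiv.Perm (ZMod (2^t))) 1 - (w : Equiv.Perm (ZMod (2^t))) 0 := by
      rw [← hν z, ← hν w, hzw]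
    exact Subtype.ext (mult_inj hX hYX hP hrad z.2 w.2 this)
  have hbij : Function.Bijective ν := by
    rw [Nat.bijective_iff_injective_and_card]
    refine ⟨hinj, ?_⟩
    rw [hcu]
    have hle : Nat.card Y ≤ 2^(t-1) := by
      calc Nat.card Y ≤ Nat.card (ZMod (2^t))ˣ := Nat.card_le_card_of_injective ν hinj
      _ = 2^(t-1) := hcu
    omega
  intro u hu
  obtain ⟨y, hy⟩ := hbij.2 hu.unit
  refine ⟨y, y.2, ?_⟩
  have he : (y : Equiv.Perm (ZMod (2^t))) 1 - (y : Equiv.Perm (ZMod (2^t))) 0 = u := by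
    rw [← hν y, hy]; exact hu.unit_spec
  obtain ⟨_, hf⟩ := normal_form hX (hYX y.2)
  intro x
  rw [hf x, he]

end master3

section master4
variable {t : ℕ} [NeZero (2^t)] {α : AddAut (ZMod (2^t))}
  {X Y : Subgroup (Equiv.Perm (ZMod (2^t)))}
  {P R : Set (ZMod (2^t))}

lemma big_t_false (hX : X = Subgroup.closure
      ((Set.range fun a : ZMod (2^t) => Equiv.addLeft a) ∪ {α.toEquiv}))
    (hYX : Y ≤ X) (ht3 : 3 ≤ t)
    (hP : P = MulAction.orbit Y (0 : ZMod (2^t)))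
    (hR : ∃ a, R = MulAction.orbit Y a)
    (hcover : P ∪ R = Set.univ) (hdisj : Disjoint P R)
    (hrad : ∀ u, (fun x => x + u) '' P = P → u = 0) : False := by
  have ht1 : 1 ≤ t := by omega
  set h : ZMod (2^t) := ((2^(t-1) : ℕ) : ZMod (2^t)) with hh
  have hRP := R_struct hX hYX ht1 hP hR hcover hdisj hrad
  have hcardP := card_P ht1 hcover hdisj hRP
  have hadd := h_add_h (t := t) ht1
  have hsq := h_sq (t := t) (by omega)
  rw [← hh] at hadd hsq hRP
  obtain ⟨y, hy, hyf⟩ := mult_surj hX hYX ht1 hP hcardP hrad (1 + h) (u0_unit (by omega))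
  set c : ZMod (2^t) := y 0 with hc
  -- y * y is a translation
  have hyy : ∀ x, (y * y) x = x + ((1+h) * c + c) := by
    intro x
    simp only [Equiv.Perm.mul_apply]
    rw [hyf x, hyf ((1+h) * x + c)]
    linear_combination (x : ZMod (2^t)) * hadd + x * hsq
  have htr : (1+h) * c + c = 0 := transl_triv hP hrad (mul_mem hy hy) hyy
  -- deduce 2c = 0
  have hwu := w_unit (t := t) ht3
  have hw2 : ((1 + 2^(t-2) : ℕ) : ZMod (2^t)) * 2 = 2 + h := by
    rw [hh]
    push_cast
    have : ((2:ZMod (2^t)))^(t-2) * 2 = 2^(t-1) := by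
      rw [← pow_succ]; congr 1; omega
    linear_combination this
  have h2c : c + c = 0 := by
    have hmul : ((1 + 2^(t-2) : ℕ) : ZMod (2^t)) * (c + c) = 0 := by
      linear_combination htr + c * hw2
    obtain ⟨v, hv⟩ := hwu
    have := congrArg (fun z => ((v⁻¹ : (ZMod (2^t))ˣ) : ZMod (2^t)) * z) hmul
    simp only [mul_zero] at this
    rw [← mul_assoc, ← hv] at this
    simp at this
    exact this
  have h0P : (0 : ZMod (2^t)) ∈ P := by rw [hP]; exact MulAction.mem_orbit_self 0
  have hhR : h ∈ R := by rw [hRP]; exact ⟨0, h0P, by simp⟩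
  have hcP : c ∈ P := by rw [hc, hP]; exact ⟨⟨y, hy⟩, rfl⟩
  rcases two_c ht1 h2c with hc0 | hch
  · -- c = 0 : use the point 1
    have h1 : (1 : ZMod (2^t)) ∈ P ∪ R := by rw [hcover]; trivial
    rcases h1 with h1P | h1R
    · have hy1P : y 1 ∈ P := by rw [hP] at h1P ⊢; exact orbit_inv Y hy h1P
      have hy1R : y 1 ∈ R := by
        rw [hyf 1, hc0, hRP]
        refine ⟨1, h1P, ?_⟩
        show (1 : ZMod (2^t)) + h = (1+h)*1 + 0
        ring
      exact Set.disjoint_left.mp hdisj hy1P hy1R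
    · obtain ⟨p, hpP, hp1⟩ := by rw [hRP] at h1R; exact h1R
      simp only at hp1
      have hypP : y p ∈ P := by rw [hP] at hpP ⊢; exact orbit_inv Y hy hpP
      have hyp1 : y p = 1 := by
        rw [hyf p, hc0]
        linear_combination hp1 + h * hp1 - hsq
      rw [hyp1] at hypP
      exact Set.disjoint_left.mp hdisj hypP h1R
  · -- c = h
    rw [hch] at hcP
    exact Set.disjoint_left.mp hdisj hcP hhR

end master4

-- if α is the identity, X consists of translations
lemma transl_only {n : ℕ} [NeZero n] {α : AddAut (ZMod n)}
    {X : Subgroup (Equiv.Perm (ZMod n))}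
    (hX : X = Subgroup.closure
      ((Set.range fun a : ZMod n => Equiv.addLeft a) ∪ {α.toEquiv}))
    (hα : ∀ x, α x = x) :
    ∀ y ∈ X, ∃ d, ∀ x, y x = x + d := by
  intro y hy
  rw [hX] at hy
  induction hy using Subgroup.closure_induction'' with
  | mem y h =>
    rcases h with h | h
    · rcases h with ⟨a, rfl⟩
      exact ⟨a, fun x => by simp [add_comm]⟩
    · rcases h with rfl
      exact ⟨0, fun x => by simp [hα x]⟩
  | inv_mem y h =>
    rcases h with h | h
    · rcases h with ⟨a, rfl⟩
      exact ⟨-a, fun x => by simp [sub_eq_add_neg, add_comm]⟩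
    · rcases h with rfl
      refine ⟨0, fun x => ?_⟩
      have : α (α.symm x) = α.symm x := hα _
      simp only [AddEquiv.apply_symm_apply] at this
      simpa using this.symm
  | one => exact ⟨0, fun x => by simp⟩
  | mul y z _ _ hy hz =>
    rcases hy with ⟨d, hyf⟩
    rcases hz with ⟨e, hzf⟩
    exact ⟨e + d, fun x => by simp only [Equiv.Perm.mul_apply, hzf, hyf]; ring⟩

section tEq2
variable {α : AddAut (ZMod (2^2))}
  {X Y : Subgroup (Equiv.Perm (ZMod (2^2)))}
  {P R : Set (ZMod (2^2))}

lemma t2_struct (hX : X = Subgroup.closure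
      ((Set.range fun a : ZMod (2^2) => Equiv.addLeft a) ∪ {α.toEquiv}))
    (hYX : Y ≤ X)
    (hP : P = MulAction.orbit Y (0 : ZMod (2^2)))
    (hR : ∃ a, R = MulAction.orbit Y a)
    (hcover : P ∪ R = Set.univ) (hdisj : Disjoint P R)
    (hrad : ∀ u, (fun x => x + u) '' P = P → u = 0) :
    (∀ x : ZMod (2^2), α x = -x) ∧
      ∃ i : ZMod (2^2), (i = 1 ∨ i = 3) ∧ P = {0, i} ∧ R = {2, -i} := by
  have hRP := R_struct (t := 2) hX hYX (by omega) hP hR hcover hdisj hrad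
  have hcardP := card_P (t := 2) (by omega) hcover hdisj hRP
  have hhval : ((2^(2-1) : ℕ) : ZMod (2^2)) = 2 := by decide
  rw [hhval] at hRP
  obtain ⟨y, hy, hyf⟩ := mult_surj (t := 2) hX hYX (by omega) hP hcardP hrad 3 (by decide)
  set c : ZMod (2^2) := y 0 with hc
  have h0P : (0 : ZMod (2^2)) ∈ P := by rw [hP]; exact MulAction.mem_orbit_self 0
  have h2R : (2 : ZMod (2^2)) ∈ R := by rw [hRP]; exact ⟨0, h0P, by simp⟩
  have hcP : c ∈ P := by rw [hc, hP]; exact ⟨⟨y, hy⟩, rfl⟩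
  -- α is negation
  have hα : ∀ x : ZMod (2^2), α x = -x := by
    have hunit : IsUnit (α 1) := alpha_unit α
    have key : ∀ v : ZMod (2^2), IsUnit v → v = 1 ∨ v = 3 := by decide
    rcases key _ hunit with h1 | h3
    · exfalso
      have hid : ∀ x : ZMod (2^2), α x = x := by
        intro x; rw [addhom_form α x, h1, one_mul]
      obtain ⟨d, hd⟩ := transl_only hX hid y (hYX hy)
      have e0 : c = 0 + d := by rw [hc, hd 0]
      have e1 : 3 * 1 + c = 1 + d := by rw [← hyf 1, hd 1]
      have : (3 : ZMod (2^2)) = 1 := by linear_combination e1 - e0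
      exact absurd this (by decide)
    · intro x
      rw [addhom_form α x, h3]
      have key2 : ∀ v : ZMod 4, (3:ZMod 4)*v = -v := by decide
      exact key2 x
  -- elements of Y
  have hYelts : ∀ z ∈ Y, z = 1 ∨ z = y := by
    intro z hz
    obtain ⟨huz, hzf⟩ := normal_form hX (hYX hz)
    have key : ∀ v : ZMod (2^2), IsUnit v → v = 1 ∨ v = 3 := by decide
    rcases key _ huz with h1 | h3
    · left
      rw [h1] at hzf
      have hz0 : z 0 = 0 := transl_triv hP hrad hz
        (fun x => by rw [hzf x, one_mul, add_comm])
      apply Equiv.ext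
      intro x
      rw [hzf x, hz0, one_mul, add_zero, Equiv.Perm.one_apply]
    · right
      have hy31 : y 1 - y 0 = 3 := by rw [hyf 1, ← hc]; ring
      exact mult_inj hX hYX hP hrad hz hy (by rw [h3, hy31])
  -- P = {0, c}
  have hPeq : P = {0, c} := by
    apply Set.Subset.antisymm
    · intro x hx
      rw [hP] at hx
      obtain ⟨g, hg⟩ := hx
      have hgx : (g : Equiv.Perm (ZMod (2^2))) 0 = x := hg
      rcases hYelts (g : Equiv.Perm (ZMod (2^2))) g.2 with h1 | hyy
      · left
        rw [← hgx, h1, Equiv.Perm.one_apply]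
      · right
        rw [← hgx, hyy]
        exact Set.mem_singleton_iff.mpr hc.symm
    · rintro x (rfl | rfl)
      · exact h0P
      · exact hcP
  have hcne0 : c ≠ 0 := by
    intro h0
    rw [h0] at hPeq
    rw [hPeq] at hcardP
    simp at hcardP
  have hcne2 : c ≠ 2 := by
    intro h2
    rw [h2] at hcP
    exact Set.disjoint_left.mp hdisj hcP h2R
  have hc13 : c = 1 ∨ c = 3 := by
    have : ∀ v : ZMod (2^2), v ≠ 0 → v ≠ 2 → v = 1 ∨ v = 3 := by decide
    exact this c hcne0 hcne2
  refine ⟨hα, c, hc13, hPeq, ?_⟩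
  rw [hRP, hPeq]
  have hneg : c + 2 = -c := by rcases hc13 with h13 | h13 <;> rw [h13] <;> decide
  apply Set.Subset.antisymm
  · rintro x ⟨p, (rfl | rfl), rfl⟩
    · left; simp
    · right; simp only [← hneg]; rfl
  · rintro x (rfl | rfl)
    · exact ⟨0, Or.inl rfl, by simp⟩
    · exact ⟨c, Or.inr rfl, by simp [hneg]⟩

theorem stmt_13 (n t : ℕ) (hn : n = 2 ^ t) [NeZero n]
    (α : AddAut (ZMod n))
    (X : Subgroup (Equiv.Perm (ZMod n)))
    (hX : X = Subgroup.closure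
      ((Set.range fun a : ZMod n => Equiv.addLeft a) ∪ {α.toEquiv}))
    (Y : Subgroup (Equiv.Perm (ZMod n))) (hYX : Y ≤ X)
    (O₁ O₂ : Set (ZMod n))
    (hO₁ : ∃ a, O₁ = MulAction.orbit Y a) (hO₂ : ∃ a, O₂ = MulAction.orbit Y a)
    (hcover : O₁ ∪ O₂ = Set.univ) (hdisj : Disjoint O₁ O₂)
    (hrad : {u : ZMod n | (fun x => x + u) '' O₁ = O₁} = {0}) :
    t ≤ 2 ∧
      (t = 2 → O₁.ncard = 2 ∧ O₂.ncard = 2 ∧ (∀ x : ZMod n, α x = -x) ∧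
        ∃ i : ZMod n, (i = 1 ∨ i = 3) ∧
          ({O₁, O₂} : Set (Set (ZMod n))) = {{0, i}, {2, -i}}) := by
  subst hn
  -- radical in pointwise form
  have hrad1 : ∀ u : ZMod (2^t), (fun x => x + u) '' O₁ = O₁ → u = 0 := by
    intro u hu
    have hm : u ∈ {u : ZMod (2^t) | (fun x => x + u) '' O₁ = O₁} := hu
    rw [hrad] at hm
    exact hm
  -- O₂ is the complement of O₁ and vice versa
  have hcompl2 : O₂ = O₁ᶜ := by
    apply Set.Subset.antisymm
    · intro x hx
      exact fun hx1 => Set.disjoint_left.mp hdisj hx1 hx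
    · intro x hx
      rcases (by rw [hcover]; trivial : x ∈ O₁ ∪ O₂) with h | h
      · exact absurd h hx
      · exact h
  have hrad2 : ∀ u : ZMod (2^t), (fun x => x + u) '' O₂ = O₂ → u = 0 := by
    intro u hu
    apply hrad1 u
    have hbij : Function.Bijective (fun x : ZMod (2^t) => x + u) :=
      (Equiv.addRight u).bijective
    have h1 : O₁ = O₂ᶜ := by rw [hcompl2, compl_compl]
    rw [h1, Set.image_compl_eq hbij, hu]
  -- orbit of 0
  have h0mem : (0 : ZMod (2^t)) ∈ O₁ ∪ O₂ := by rw [hcover]; trivial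
  have horb : ∀ (O : Set (ZMod (2^t))), (∃ a, O = MulAction.orbit Y a) →
      (0 : ZMod (2^t)) ∈ O → O = MulAction.orbit Y (0 : ZMod (2^t)) := by
    rintro O ⟨a, rfl⟩ h0
    obtain ⟨g, hg⟩ := h0
    apply Set.Subset.antisymm
    · rintro x ⟨k, hk⟩
      refine ⟨k * g⁻¹, ?_⟩
      show (k * g⁻¹ : ↥Y) • (0 : ZMod (2^t)) = x
      have hga : (g : ↥Y) • a = 0 := hg
      have hia : (g⁻¹ : ↥Y) • (0 : ZMod (2^t)) = a := inv_smul_eq_iff.mpr hga.symm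
      rw [mul_smul, hia]
      exact hk
    · rintro x ⟨k, hk⟩
      exact ⟨k * g, by
        show (k * g : ↥Y) • a = x
        rw [mul_smul, show (g:↥Y) • a = 0 from hg]
        exact hk⟩
  rcases h0mem with h0 | h0
  · have hPorb := horb O₁ hO₁ h0
    constructor
    · by_contra hle
      push_neg at hle
      exact big_t_false hX hYX (by omega) hPorb hO₂ hcover hdisj hrad1
    · intro ht2
      subst ht2
      obtain ⟨hα, i, hi13, hPeq, hReq⟩ :=
        t2_struct hX hYX hPorb hO₂ hcover hdisj hrad1
      have hi0 : (0 : ZMod (2^2)) ≠ i := by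
        rcases hi13 with h | h <;> rw [h] <;> decide
      have h2i : (2 : ZMod (2^2)) ≠ -i := by
        rcases hi13 with h | h <;> rw [h] <;> decide
      refine ⟨?_, ?_, hα, i, hi13, ?_⟩
      · rw [hPeq]; exact Set.ncard_pair hi0
      · rw [hReq]; exact Set.ncard_pair h2i
      · rw [hPeq, hReq]
  · have hPorb := horb O₂ hO₂ h0
    have hcover' : O₂ ∪ O₁ = Set.univ := by rw [Set.union_comm]; exact hcover
    constructor
    · by_contra hle
      push_neg at hle
      exact big_t_false hX hYX (by omega) hPorb hO₁ hcover' hdisj.symm hrad2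
    · intro ht2
      subst ht2
      obtain ⟨hα, i, hi13, hPeq, hReq⟩ :=
        t2_struct hX hYX hPorb hO₁ hcover' hdisj.symm hrad2
      have hi0 : (0 : ZMod (2^2)) ≠ i := by
        rcases hi13 with h | h <;> rw [h] <;> decide
      have h2i : (2 : ZMod (2^2)) ≠ -i := by
        rcases hi13 with h | h <;> rw [h] <;> decide
      refine ⟨?_, ?_, hα, i, hi13, ?_⟩
      · rw [hReq]; exact Set.ncard_pair h2i
      · rw [hPeq]; exact Set.ncard_pair hi0
      · rw [hPeq, hReq]
        exact Set.pair_comm _ _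
end tEq2
end hfacts
end

section
/- A non-identity element of the holomorph of ℤ/nℤ (with n = p^t) whose order is coprime to p has exactly one fixed point in its action on ℤ/nℤ. -/
theorem stmt_14 (n p t : ℕ) (hp : p.Prime) (ht : 1 ≤ t) (hn : n = p ^ t)
    (g : Equiv.Perm (ZMod n))
    (hg : g ∈ Subgroup.closure ((Set.range fun a : ZMod n => Equiv.addLeft a) ∪
      Set.range fun β : AddAut (ZMod n) => β.toEquiv))
    (hg1 : g ≠ 1) (hord : (orderOf g).Coprime p) :
    ∃! x : ZMod n, g x = x := by
  subst hn
  haveI : Fact p.Prime := ⟨hp⟩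
  haveI : NeZero p := ⟨hp.pos.ne'⟩
  haveI : NeZero (p ^ t) := ⟨pow_ne_zero t hp.pos.ne'⟩
  -- every element of the closure is an affine map
  have key : ∀ f : Equiv.Perm (ZMod (p ^ t)),
      f ∈ Subgroup.closure ((Set.range fun a : ZMod (p ^ t) => Equiv.addLeft a) ∪
        Set.range fun β : AddAut (ZMod (p ^ t)) => β.toEquiv) →
      ∃ (a : ZMod (p ^ t)) (β : AddAut (ZMod (p ^ t))), ∀ x, f x = β x + a := by
    intro f hf
    induction hf using Subgroup.closure_induction with
    | mem y hy =>
      rcases hy with ⟨a, rfl⟩ | ⟨β, rfl⟩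
      · exact ⟨a, 0, fun x => by simp [add_comm]⟩
      · exact ⟨0, β, fun x => by simp⟩
    | one => exact ⟨0, 0, fun x => by simp⟩
    | mul f₁ f₂ _ _ ih1 ih2 =>
      obtain ⟨a, β, ha⟩ := ih1
      obtain ⟨b, γ, hb⟩ := ih2
      exact ⟨β b + a, β + γ, fun x => by
        rw [Equiv.Perm.mul_apply, hb, ha, map_add, AddAut.add_apply, add_assoc]⟩
    | inv f₁ _ ih =>
      obtain ⟨a, β, ha⟩ := ih
      refine ⟨-((-β) a), -β, fun x => ?_⟩
      apply f₁.injective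
      rw [Equiv.Perm.coe_inv, Equiv.apply_symm_apply, ha, map_add, map_neg]
      simp
  obtain ⟨a, β, hab⟩ := key g hg
  set c := β 1 with hcdef
  have hβx : ∀ x : ZMod (p ^ t), β x = x * c := by
    intro x
    have h1 : x = (x.val : ℕ) • (1 : ZMod (p ^ t)) := by
      rw [nsmul_eq_mul, mul_one, ZMod.natCast_val, ZMod.cast_id]
    calc β x = β ((x.val : ℕ) • (1 : ZMod (p ^ t))) := by rw [← h1]
      _ = (x.val : ℕ) • β 1 := map_nsmul β _ _
      _ = ((x.val : ℕ) : ZMod (p ^ t)) * c := nsmul_eq_mul _ _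
      _ = x * c := by rw [ZMod.natCast_val, ZMod.cast_id]
  have hgx : ∀ x, g x = x * c + a := fun x => by rw [hab, hβx]
  by_cases hc1 : c = 1
  · -- translation case: contradiction with hg1
    exfalso
    apply hg1
    have hpow : ∀ (k : ℕ) (x : ZMod (p ^ t)), (g ^ k) x = x + k • a := by
      intro k
      induction k with
      | zero => simp
      | succ k ih =>
        intro x
        rw [pow_succ', Equiv.Perm.mul_apply, ih, hgx, hc1, mul_one, succ_nsmul]
        abel
    have hone : g ^ (p ^ t) = 1 := by
      ext x
      rw [hpow]
      simp [nsmul_eq_mul]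
    have hdvd : orderOf g ∣ p ^ t := orderOf_dvd_of_pow_eq_one hone
    have h1 : orderOf g = 1 :=
      Nat.dvd_one.mp ((hord.pow_right t) ▸ Nat.dvd_gcd dvd_rfl hdvd)
    exact orderOf_eq_one_iff.mp h1
  · -- c ≠ 1 : show c - 1 is a unit
    have hm : 0 < orderOf g := orderOf_pos g
    have hck : ∀ k : ℕ, (g ^ k) 1 - (g ^ k) 0 = c ^ k := by
      intro k
      induction k with
      | zero => simp
      | succ k ih =>
        rw [pow_succ', Equiv.Perm.mul_apply, Equiv.Perm.mul_apply, hgx, hgx,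
          pow_succ, ← ih]
        ring
    have hcm : c ^ orderOf g = 1 := by
      have h := hck (orderOf g)
      rw [pow_orderOf_eq_one] at h
      simpa using h.symm
    have hcu : IsUnit c := IsUnit.of_pow_eq_one hcm hm.ne'
    have hpt : p ∣ p ^ t := dvd_pow_self p (by omega)
    have hφc : (ZMod.castHom hpt (ZMod p)) c ≠ 1 := by
      intro h1
      apply hc1
      obtain ⟨u, huc⟩ := hcu
      have hum : u ^ orderOf g = 1 := by
        ext
        simp [huc, hcm]
      have hker : u ∈ (ZMod.unitsMap hpt).ker := by
        rw [MonoidHom.mem_ker]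
        ext
        simpa [ZMod.unitsMap_def, huc] using h1
      have hsurj : Function.Surjective (ZMod.unitsMap hpt) :=
        ZMod.unitsMap_surjective hpt
      have hcard : Nat.card (ZMod.unitsMap hpt).ker = p ^ (t - 1) := by
        have h2 : Nat.card (ZMod (p ^ t))ˣ =
            Nat.card ((ZMod (p ^ t))ˣ ⧸ (ZMod.unitsMap hpt).ker) *
              Nat.card (ZMod.unitsMap hpt).ker :=
          Subgroup.card_eq_card_quotient_mul_card_subgroup _
        have h3 : Nat.card ((ZMod (p ^ t))ˣ ⧸ (ZMod.unitsMap hpt).ker) =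
            Nat.card (ZMod p)ˣ :=
          Nat.card_congr (QuotientGroup.quotientKerEquivOfSurjective _ hsurj).toEquiv
        rw [h3] at h2
        have h4 : Nat.card (ZMod (p ^ t))ˣ = p ^ (t - 1) * (p - 1) := by
          rw [Nat.card_eq_fintype_card, ZMod.card_units_eq_totient,
            Nat.totient_prime_pow hp (by omega)]
        have h5 : Nat.card (ZMod p)ˣ = p - 1 := by
          rw [Nat.card_eq_fintype_card, ZMod.card_units_eq_totient, Nat.totient_prime hp]
        rw [h4, h5] at h2
        have hppos : 0 < p - 1 := by have := hp.two_le; omega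
        apply Nat.eq_of_mul_eq_mul_left hppos
        rw [← h2]
        exact Nat.mul_comm _ _
      have hdvd1 : orderOf u ∣ p ^ (t - 1) :=
        hcard ▸ Subgroup.orderOf_dvd_natCard _ hker
      have hdvd2 : orderOf u ∣ orderOf g := orderOf_dvd_of_pow_eq_one hum
      have hcop : (orderOf u).Coprime p := Nat.Coprime.coprime_dvd_left hdvd2 hord
      have h6 : orderOf u = 1 :=
        Nat.dvd_one.mp ((hcop.pow_right (t - 1)) ▸ Nat.dvd_gcd dvd_rfl hdvd1)
      have h7 : u = 1 := orderOf_eq_one_iff.mp h6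
      calc c = ↑u := huc.symm
        _ = 1 := by rw [h7]; rfl
    have hnd : ¬ p ∣ (c - 1).val := by
      intro hd
      apply hφc
      have h0 : (ZMod.castHom hpt (ZMod p)) (c - 1) = 0 := by
        rw [ZMod.castHom_apply, ← ZMod.natCast_val]
        exact (ZMod.natCast_eq_zero_iff _ p).mpr hd
      rw [map_sub, map_one, sub_eq_zero] at h0
      exact h0
    have hunit : IsUnit (c - 1) := by
      have hcast : (((c - 1).val : ℕ) : ZMod (p ^ t)) = c - 1 := by
        rw [ZMod.natCast_val, ZMod.cast_id]
      rw [← hcast, ZMod.isUnit_iff_coprime]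
      exact (Nat.coprime_comm.mp ((hp.coprime_iff_not_dvd).mpr hnd)).pow_right t
    obtain ⟨e, he⟩ := hunit
    have hee : (↑e⁻¹ : ZMod (p ^ t)) * ↑e = 1 := e.inv_mul
    have hiff : ∀ y : ZMod (p ^ t), g y = y ↔ y * ↑e = -a := by
      intro y
      rw [hgx, he]
      constructor
      · intro h; linear_combination h
      · intro h; linear_combination h
    refine ⟨↑e⁻¹ * -a, ?_, ?_⟩
    · show g (↑e⁻¹ * -a) = ↑e⁻¹ * -a
      rw [hiff]
      calc (↑e⁻¹ * -a : ZMod (p ^ t)) * ↑e = ↑e⁻¹ * ↑e * -a := by ring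
        _ = -a := by rw [hee, one_mul]
    · intro y hy
      calc y = y * ↑e * ↑e⁻¹ := by rw [mul_assoc, Units.mul_inv, mul_one]
        _ = -a * ↑e⁻¹ := by rw [(hiff y).mp hy]
        _ = ↑e⁻¹ * -a := by ring
end

section
/- Let q = p^r and let C ≤ F_q^* be the subgroup of index 4 (so 4 | q−1), with ω a generator of F_q^*. If the Frobenius x ↦ x^p maps the coset Cω to Cω^3, then p ≡ 3 (mod 4) and r is even. -/
theorem stmt_16 (p r : ℕ) (hp : p.Prime) (hr : 0 < r)
    (F : Type*) [Field F] [Fintype F] (hcard : Fintype.card F = p ^ r)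
    (h4 : 4 ∣ p ^ r - 1)
    (ω : Fˣ) (hω : ∀ x : Fˣ, x ∈ Subgroup.zpowers ω)
    (hfrob : (fun x : Fˣ => x ^ p) '' ((· * ω) '' (Subgroup.zpowers (ω ^ 4) : Set Fˣ)) =
      (· * ω ^ 3) '' (Subgroup.zpowers (ω ^ 4) : Set Fˣ)) :
    p % 4 = 3 ∧ Even r := by
  classical
  have hcardu : Fintype.card Fˣ = p ^ r - 1 := by
    rw [Fintype.card_units, hcard]
  have hord : orderOf ω = p ^ r - 1 := by
    rw [orderOf_eq_card_of_forall_mem_zpowers hω, Nat.card_eq_fintype_card, hcardu]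
  have hmem : ω ^ p ∈ (· * ω ^ 3) '' (Subgroup.zpowers (ω ^ 4) : Set Fˣ) := by
    rw [← hfrob]
    exact ⟨ω, ⟨1, Subgroup.one_mem _, one_mul ω⟩, rfl⟩
  obtain ⟨c, hc, hceq⟩ := hmem
  obtain ⟨k, hk⟩ := hc
  have hk' : (ω ^ 4) ^ k = c := hk
  have hceq' : c * ω ^ 3 = ω ^ p := hceq
  have heq : ω ^ ((p : ℤ)) = ω ^ (4 * k + 3) := by
    rw [zpow_natCast, ← hceq', ← hk', zpow_add, ← zpow_natCast ω 4, ← zpow_mul,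
      ← zpow_natCast ω 3]
    norm_num
  have hmod : (p : ℤ) ≡ 4 * k + 3 [ZMOD ((p ^ r - 1 : ℕ) : ℤ)] := by
    rw [← hord]
    exact (zpow_eq_zpow_iff_modEq.mp heq)
  have hdvd : ((p ^ r - 1 : ℕ) : ℤ) ∣ (4 * k + 3) - (p : ℤ) := hmod.dvd
  have h4' : (4 : ℤ) ∣ ((p ^ r - 1 : ℕ) : ℤ) := by exact_mod_cast Int.natCast_dvd_natCast.mpr h4
  obtain ⟨m, hm⟩ := h4'.trans hdvd
  have hp4 : p % 4 = 3 := by omega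
  refine ⟨hp4, ?_⟩
  have hpos : 1 ≤ p ^ r := Nat.one_le_pow _ _ hp.pos
  have h1 : p ^ r % 4 = 1 := by omega
  have hz : ((p : ZMod 4)) ^ r = 1 := by
    have : ((p ^ r : ℕ) : ZMod 4) = ((p ^ r % 4 : ℕ) : ZMod 4) := (ZMod.natCast_mod _ _).symm
    rw [h1] at this
    push_cast at this
    exact this
  have hp3 : (p : ZMod 4) = -1 := by
    have : ((p : ℕ) : ZMod 4) = ((p % 4 : ℕ) : ZMod 4) := (ZMod.natCast_mod _ _).symm
    rw [hp4] at this
    rw [this]; decide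
  rw [hp3] at hz
  exact (neg_one_pow_eq_one_iff_even (by decide : (-1 : ZMod 4) ≠ 1)).mp hz
end
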